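/- arXiv:2309.00370 — 4 statements merged into one kernel-verified Lean document; each statement's English description precedes it below -/
import Mathlib

section
/- For a < b, the union over all c > a and d < b of the classes I(c,d) equals the class I_o(a,b). In particular, φ ∈ I_o(a,b) if and only if there exists ε > 0 such that λ^{a+ε} ≲ φ(λt)/φ(t) ≲ λ^{b−ε} for all t > 0 and λ ≥ 1. -/
open Real MeasureTheory Set Filter ENNReal

/-- `s_φ(λ) = sup_{t>0} φ(λt)/φ(t)`, valued in `[0,∞]`. -/
noncomputable def sPhi (φ : ℝ → ℝ) (l : ℝ) : ℝ≥0∞ :=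
  ⨆ t ∈ Set.Ioi (0:ℝ), ENNReal.ofReal (φ (l * t) / φ t)

/-- `φ ∈ I(a,b)`: `s_φ(λ) = O(λ^a)` as `λ → 0` and `s_φ(λ) = O(λ^b)` as `λ → ∞`. -/
def memI (φ : ℝ → ℝ) (a b : ℝ) : Prop :=
  (∃ C > (0:ℝ), ∃ δ > (0:ℝ), ∀ l : ℝ, 0 < l → l < δ →
    sPhi φ l ≤ ENNReal.ofReal (C * l ^ a)) ∧
  (∃ C > (0:ℝ), ∃ M : ℝ, ∀ l : ℝ, M < l →
    sPhi φ l ≤ ENNReal.ofReal (C * l ^ b))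

/-- `φ ∈ I_o(a,b)`: `s_φ(λ) = o(λ^a)` as `λ → 0` and `s_φ(λ) = o(λ^b)` as `λ → ∞`. -/
def memIo (φ : ℝ → ℝ) (a b : ℝ) : Prop :=
  (∀ ε > (0:ℝ), ∃ δ > (0:ℝ), ∀ l : ℝ, 0 < l → l < δ →
    sPhi φ l ≤ ENNReal.ofReal (ε * l ^ a)) ∧
  (∀ ε > (0:ℝ), ∃ M : ℝ, ∀ l : ℝ, M < l →
    sPhi φ l ≤ ENNReal.ofReal (ε * l ^ b))

lemma ratio_le_sPhi (φ : ℝ → ℝ) {l t : ℝ} (ht : 0 < t) :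
    ENNReal.ofReal (φ (l * t) / φ t) ≤ sPhi φ l := by
  exact le_biSup (fun t => ENNReal.ofReal (φ (l * t) / φ t)) ht

lemma sPhi_le (φ : ℝ → ℝ) {l B : ℝ}
    (hB : ∀ t ∈ Set.Ioi (0:ℝ), φ (l * t) / φ t ≤ B) :
    sPhi φ l ≤ ENNReal.ofReal B :=
  iSup₂_le fun t ht => ENNReal.ofReal_le_ofReal (hB t ht)

lemma sPhi_submul (φ : ℝ → ℝ) (hφ : ∀ t ∈ Set.Ioi (0:ℝ), 0 < φ t)
    {x y : ℝ} (hx : 0 < x) (hy : 0 < y) :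
    sPhi φ (x * y) ≤ sPhi φ x * sPhi φ y := by
  refine iSup₂_le fun t ht => ?_
  have ht' : (0:ℝ) < t := ht
  have hyt : (0:ℝ) < y * t := mul_pos hy ht'
  have hxyt : (0:ℝ) < x * (y * t) := mul_pos hx hyt
  have h1 : φ (x * y * t) / φ t = (φ (x * (y * t)) / φ (y * t)) * (φ (y * t) / φ t) := by
    rw [mul_assoc, div_mul_div_cancel₀ (hφ _ hyt).ne']
  rw [h1, ENNReal.ofReal_mul (le_of_lt (div_pos (hφ _ hxyt) (hφ _ hyt)))]
  exact mul_le_mul' (ratio_le_sPhi φ hyt) (ratio_le_sPhi φ ht')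

lemma rpow_le_max {u v x p : ℝ} (hu : 0 < u) (hxu : u ≤ x) (hxv : x ≤ v) :
    x ^ p ≤ max (u ^ p) (v ^ p) := by
  rcases le_or_gt 0 p with hp | hp
  · exact le_max_of_le_right (Real.rpow_le_rpow (hu.le.trans hxu) hxv hp)
  · exact le_max_of_le_left (Real.rpow_le_rpow_of_nonpos hu hxu hp.le)

lemma min_le_rpow {u v x p : ℝ} (hu : 0 < u) (hxu : u ≤ x) (hxv : x ≤ v) :
    min (u ^ p) (v ^ p) ≤ x ^ p := by
  rcases le_or_gt 0 p with hp | hp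
  · exact le_trans (min_le_left _ _) (Real.rpow_le_rpow hu.le hxu hp)
  · exact le_trans (min_le_right _ _) (Real.rpow_le_rpow_of_nonpos (hu.trans_le hxu) hxv hp.le)

/-- `sPhi` is bounded on compact subintervals of `(0,∞)`, given power bounds near `0` and `∞`. -/
lemma sPhi_bddOn (φ : ℝ → ℝ) (hφ : ∀ t ∈ Set.Ioi (0:ℝ), 0 < φ t)
    {a b C₀ C₁ δ₁ M₁ : ℝ} (hδ₁ : 0 < δ₁) (hC₀ : 0 < C₀) (hC₁ : 0 < C₁)
    (h0 : ∀ l : ℝ, 0 < l → l < δ₁ → sPhi φ l ≤ ENNReal.ofReal (C₀ * l ^ a))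
    (hinf : ∀ l : ℝ, M₁ < l → sPhi φ l ≤ ENNReal.ofReal (C₁ * l ^ b))
    {u v : ℝ} (hu : 0 < u) (huv : u ≤ v) :
    ∃ B > (0:ℝ), ∀ μ : ℝ, u ≤ μ → μ ≤ v → sPhi φ μ ≤ ENNReal.ofReal B := by
  obtain ⟨L, hL1, hinvL, huL⟩ : ∃ L : ℝ, 1 < L ∧ L⁻¹ < δ₁ ∧ M₁ < u * L := by
    refine ⟨max (δ₁⁻¹) (max (|M₁| / u) 1) + 1, ?_, ?_, ?_⟩
    · have h1 := le_max_right (δ₁⁻¹) (max (|M₁| / u) 1)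
      have h2 := le_max_right (|M₁| / u) (1:ℝ)
      linarith
    · refine inv_lt_of_inv_lt₀ hδ₁ ?_
      have h1 := le_max_left (δ₁⁻¹) (max (|M₁| / u) 1)
      linarith
    · have h1 := le_max_left (|M₁| / u) (1:ℝ)
      have h2 := le_max_right (δ₁⁻¹) (max (|M₁| / u) 1)
      have h3 : |M₁| / u < max (δ₁⁻¹) (max (|M₁| / u) 1) + 1 := by linarith
      have h4 : |M₁| < u * (max (δ₁⁻¹) (max (|M₁| / u) 1) + 1) := by
        rw [mul_comm]
        exact (div_lt_iff₀ hu).mp h3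
      exact lt_of_le_of_lt (le_abs_self M₁) h4
  have hL0 : (0:ℝ) < L := lt_trans one_pos hL1
  have hinvL0 : (0:ℝ) < L⁻¹ := inv_pos.mpr hL0
  set X : ℝ := max ((u * L) ^ b) ((v * L) ^ b) with hX
  have hX0 : 0 < X := lt_max_of_lt_left (Real.rpow_pos_of_pos (mul_pos hu hL0) b)
  have hY0 : 0 < (L⁻¹ : ℝ) ^ a := Real.rpow_pos_of_pos hinvL0 a
  refine ⟨C₁ * X * (C₀ * L⁻¹ ^ a), by positivity, fun μ hμu hμv => ?_⟩
  have hμ0 : 0 < μ := lt_of_lt_of_le hu hμu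
  have hsplit : μ = (μ * L) * L⁻¹ := by field_simp
  have hμL : M₁ < μ * L := lt_of_lt_of_le huL (by nlinarith)
  calc sPhi φ μ = sPhi φ ((μ * L) * L⁻¹) := by rw [← hsplit]
    _ ≤ sPhi φ (μ * L) * sPhi φ L⁻¹ := sPhi_submul φ hφ (mul_pos hμ0 hL0) hinvL0
    _ ≤ ENNReal.ofReal (C₁ * (μ * L) ^ b) * ENNReal.ofReal (C₀ * L⁻¹ ^ a) :=
        mul_le_mul' (hinf _ hμL) (h0 _ hinvL0 hinvL)
    _ ≤ ENNReal.ofReal (C₁ * X) * ENNReal.ofReal (C₀ * L⁻¹ ^ a) := by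
        refine mul_le_mul' (ENNReal.ofReal_le_ofReal ?_) le_rfl
        refine mul_le_mul_of_nonneg_left ?_ hC₁.le
        exact rpow_le_max (mul_pos hu hL0) (by nlinarith) (by nlinarith)
    _ = ENNReal.ofReal (C₁ * X * (C₀ * L⁻¹ ^ a)) := by
        rw [← ENNReal.ofReal_mul (by positivity)]

lemma memIo_pow_claim (φ : ℝ → ℝ) (hφ : ∀ t ∈ Set.Ioi (0:ℝ), 0 < φ t)
    {x p : ℝ} (hx : 0 < x) (hbase : sPhi φ x ≤ ENNReal.ofReal (x ^ p)) :
    ∀ n : ℕ, sPhi φ (x ^ (n + 1)) ≤ ENNReal.ofReal (((x : ℝ) ^ (n + 1)) ^ p) := by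
  intro n
  induction n with
  | zero => simpa using hbase
  | succ n ih =>
      have hxn : (0:ℝ) < x ^ (n + 1) := pow_pos hx _
      calc sPhi φ (x ^ (n + 2)) = sPhi φ (x ^ (n + 1) * x) := by rw [← pow_succ]
        _ ≤ sPhi φ (x ^ (n + 1)) * sPhi φ x := sPhi_submul φ hφ hxn hx
        _ ≤ ENNReal.ofReal ((x ^ (n + 1) : ℝ) ^ p) * ENNReal.ofReal (x ^ p) :=
            mul_le_mul' ih hbase
        _ = ENNReal.ofReal ((x ^ (n + 1) : ℝ) ^ p * x ^ p) := by
            rw [← ENNReal.ofReal_mul (by positivity)]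
        _ = ENNReal.ofReal (((x : ℝ) ^ (n + 2)) ^ p) := by
            rw [← Real.mul_rpow (by positivity) hx.le, ← pow_succ]

lemma memIo_zero_to_memI (φ : ℝ → ℝ) (hφ : ∀ t ∈ Set.Ioi (0:ℝ), 0 < φ t) {a b : ℝ}
    (h0 : ∀ ε > (0:ℝ), ∃ δ > (0:ℝ), ∀ l : ℝ, 0 < l → l < δ →
      sPhi φ l ≤ ENNReal.ofReal (ε * l ^ a))
    (hinf : ∀ ε > (0:ℝ), ∃ M : ℝ, ∀ l : ℝ, M < l →
      sPhi φ l ≤ ENNReal.ofReal (ε * l ^ b)) :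
    ∃ c > a, ∃ C > (0:ℝ), ∃ δ > (0:ℝ), ∀ l : ℝ, 0 < l → l < δ →
      sPhi φ l ≤ ENNReal.ofReal (C * l ^ c) := by
  obtain ⟨δ₁, hδ₁, hδ₁b⟩ := h0 1 one_pos
  obtain ⟨M₁, hM₁b⟩ := hinf 1 one_pos
  obtain ⟨δ₂, hδ₂, hδ₂b⟩ := h0 (1/2) (by norm_num)
  set l₁ : ℝ := min (δ₂ / 2) 2⁻¹ with hl₁def
  have hl₁0 : 0 < l₁ := lt_min (by linarith) (by norm_num)
  have hl₁half : l₁ ≤ 2⁻¹ := min_le_right _ _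
  have hl₁lt1 : l₁ < 1 := lt_of_le_of_lt hl₁half (by norm_num)
  have hl₁δ₂ : l₁ < δ₂ := lt_of_le_of_lt (min_le_left _ _) (by linarith)
  have hlogl₁ : Real.log l₁ < 0 := Real.log_neg hl₁0 hl₁lt1
  set η : ℝ := Real.log 2 / (-Real.log l₁) with hηdef
  have hη : 0 < η := div_pos (Real.log_pos one_lt_two) (by linarith)
  have hkey : (l₁ : ℝ) ^ η = 2⁻¹ := by
    rw [Real.rpow_def_of_pos hl₁0]
    have h1 : Real.log l₁ * η = -Real.log 2 := by
      have hne : Real.log l₁ ≠ 0 := ne_of_lt hlogl₁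
      rw [hηdef, div_neg, mul_neg, mul_div_assoc', mul_comm, mul_div_assoc, div_self hne, mul_one]
    rw [h1, Real.exp_neg, Real.exp_log two_pos]
  have hbase : sPhi φ l₁ ≤ ENNReal.ofReal ((l₁ : ℝ) ^ (a + η)) := by
    refine le_trans (hδ₂b l₁ hl₁0 hl₁δ₂) (le_of_eq ?_)
    congr 1
    rw [Real.rpow_add hl₁0, hkey]
    ring
  have hclaim := memIo_pow_claim φ hφ hl₁0 hbase
  obtain ⟨B, hB, hBb⟩ := sPhi_bddOn φ hφ hδ₁ one_pos one_pos
    (by simpa using hδ₁b) (by simpa using hM₁b) hl₁0 hl₁lt1.le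
  set p : ℝ := a + η with hpdef
  set K : ℝ := max 1 ((l₁ : ℝ) ^ (-p)) with hKdef
  have hK1 : (1:ℝ) ≤ K := le_max_left _ _
  refine ⟨p, by simp [hpdef, hη], B * K, by positivity, l₁, hl₁0, fun l hl0 hl => ?_⟩
  -- find n ≥ 1 with l₁^(n+1) < l ≤ l₁^n
  have hex : ∃ n : ℕ, l₁ ^ n < l := exists_pow_lt_of_lt_one hl0 hl₁lt1
  set N := Nat.find hex with hNdef
  have hN : l₁ ^ N < l := Nat.find_spec hex
  have hN0 : N ≠ 0 := by
    intro h; rw [h] at hN; simp at hN; linarith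
  have hN1 : N ≠ 1 := by
    intro h; rw [h] at hN; simp at hN; linarith
  set n := N - 1 with hndef
  have hn1 : 1 ≤ n := by omega
  have hnN : n + 1 = N := by omega
  have hln : l ≤ l₁ ^ n := le_of_not_gt (Nat.find_min hex (by omega))
  have hln' : l₁ ^ (n + 1) < l := by rw [hnN]; exact hN
  have hl₁n : (0:ℝ) < l₁ ^ n := pow_pos hl₁0 _
  -- μ := l / l₁^n ∈ (l₁, 1]
  set μ : ℝ := l / l₁ ^ n with hμdef
  have hμ0 : 0 < μ := div_pos hl0 hl₁n
  have hμ1 : μ ≤ 1 := (div_le_one hl₁n).mpr hln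
  have hμl₁ : l₁ ≤ μ := by
    rw [hμdef, le_div_iff₀ hl₁n, ← pow_succ']
    exact hln'.le
  have hsplit : l = μ * l₁ ^ n := by
    rw [hμdef, div_mul_cancel₀ _ hl₁n.ne']
  -- bound (l₁^n)^p ≤ K * l^p
  have hub : (l₁ : ℝ) ^ n ≤ l / l₁ := by
    rw [le_div_iff₀ hl₁0, ← pow_succ]
    exact hln'.le
  have hpow : ((l₁ : ℝ) ^ n) ^ p ≤ K * l ^ p := by
    rcases le_or_gt 0 p with hp | hp
    · have h1 : ((l₁ : ℝ) ^ n) ^ p ≤ (l / l₁) ^ p := Real.rpow_le_rpow hl₁n.le hub hp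
      have h2 : (l / l₁ : ℝ) ^ p = l ^ p * (l₁ : ℝ) ^ (-p) := by
        rw [Real.div_rpow hl0.le hl₁0.le, Real.rpow_neg hl₁0.le, div_eq_mul_inv]
      refine le_trans h1 ?_
      rw [h2, mul_comm]
      exact mul_le_mul_of_nonneg_right (le_max_right _ _) (by positivity)
    · have h1 : ((l₁ : ℝ) ^ n) ^ p ≤ l ^ p :=
        Real.rpow_le_rpow_of_nonpos hl0 hln hp.le
      refine le_trans h1 ?_
      exact le_mul_of_one_le_left (by positivity) hK1
  -- combine
  have hclaim' : sPhi φ (l₁ ^ n) ≤ ENNReal.ofReal (((l₁ : ℝ) ^ n) ^ p) := by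
    have := hclaim (n - 1)
    rwa [Nat.sub_add_cancel hn1] at this
  calc sPhi φ l = sPhi φ (μ * l₁ ^ n) := by rw [← hsplit]
    _ ≤ sPhi φ μ * sPhi φ (l₁ ^ n) := sPhi_submul φ hφ hμ0 hl₁n
    _ ≤ ENNReal.ofReal B * ENNReal.ofReal (((l₁ : ℝ) ^ n) ^ p) :=
        mul_le_mul' (hBb μ hμl₁ hμ1) hclaim'
    _ = ENNReal.ofReal (B * ((l₁ : ℝ) ^ n) ^ p) := by
        rw [← ENNReal.ofReal_mul hB.le]
    _ ≤ ENNReal.ofReal (B * K * l ^ p) := by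
        refine ENNReal.ofReal_le_ofReal ?_
        rw [mul_assoc]
        exact mul_le_mul_of_nonneg_left hpow hB.le

lemma memIo_inf_to_memI (φ : ℝ → ℝ) (hφ : ∀ t ∈ Set.Ioi (0:ℝ), 0 < φ t) {a b : ℝ}
    (h0 : ∀ ε > (0:ℝ), ∃ δ > (0:ℝ), ∀ l : ℝ, 0 < l → l < δ →
      sPhi φ l ≤ ENNReal.ofReal (ε * l ^ a))
    (hinf : ∀ ε > (0:ℝ), ∃ M : ℝ, ∀ l : ℝ, M < l →
      sPhi φ l ≤ ENNReal.ofReal (ε * l ^ b)) :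
    ∃ d < b, ∃ C > (0:ℝ), ∃ M : ℝ, ∀ l : ℝ, M < l →
      sPhi φ l ≤ ENNReal.ofReal (C * l ^ d) := by
  obtain ⟨δ₁, hδ₁, hδ₁b⟩ := h0 1 one_pos
  obtain ⟨M₁, hM₁b⟩ := hinf 1 one_pos
  obtain ⟨M₂, hM₂b⟩ := hinf (1/2) (by norm_num)
  set L : ℝ := max 2 (max M₁ M₂) + 1 with hLdef
  have hL2 : (2:ℝ) ≤ L := by
    have := le_max_left (2:ℝ) (max M₁ M₂); linarith
  have hL1 : (1:ℝ) < L := by linarith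
  have hL0 : (0:ℝ) < L := by linarith
  have hLM₂ : M₂ < L := by
    have h1 := le_max_right M₁ M₂
    have h2 := le_max_right (2:ℝ) (max M₁ M₂)
    linarith
  have hlogL : 0 < Real.log L := Real.log_pos hL1
  set η : ℝ := Real.log 2 / Real.log L with hηdef
  have hη : 0 < η := div_pos (Real.log_pos one_lt_two) hlogL
  have hkey : (L : ℝ) ^ (-η) = 2⁻¹ := by
    rw [Real.rpow_def_of_pos hL0]
    have hne : Real.log L ≠ 0 := ne_of_gt hlogL
    have h1 : Real.log L * (-η) = -Real.log 2 := by
      rw [hηdef, mul_neg, mul_div_assoc', mul_comm, mul_div_assoc, div_self hne, mul_one]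
    rw [h1, Real.exp_neg, Real.exp_log two_pos]
  set q : ℝ := b - η with hqdef
  have hbase : sPhi φ L ≤ ENNReal.ofReal ((L : ℝ) ^ q) := by
    refine le_trans (hM₂b L hLM₂) (le_of_eq ?_)
    congr 1
    rw [hqdef, sub_eq_add_neg, Real.rpow_add hL0, hkey]
    ring
  have hclaim := memIo_pow_claim φ hφ hL0 hbase
  obtain ⟨B, hB, hBb⟩ := sPhi_bddOn φ hφ hδ₁ one_pos one_pos
    (by simpa using hδ₁b) (by simpa using hM₁b) one_pos hL1.le
  set K : ℝ := max 1 ((L : ℝ) ^ (-q)) with hKdef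
  have hK1 : (1:ℝ) ≤ K := le_max_left _ _
  refine ⟨q, by simp [hqdef, hη], B * K, by positivity, L, fun l hl => ?_⟩
  have hl0 : (0:ℝ) < l := lt_trans hL0 hl
  -- find n ≥ 1 with L^n ≤ l < L^(n+1)
  have hex : ∃ n : ℕ, l < L ^ n := pow_unbounded_of_one_lt l hL1
  set N := Nat.find hex with hNdef
  have hN : l < L ^ N := Nat.find_spec hex
  have hN0 : N ≠ 0 := by
    intro h; rw [h] at hN; simp at hN; linarith
  have hN1 : N ≠ 1 := by
    intro h; rw [h] at hN; simp at hN; linarith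
  set n := N - 1 with hndef
  have hn1 : 1 ≤ n := by omega
  have hnN : n + 1 = N := by omega
  have hln : L ^ n ≤ l := le_of_not_gt (Nat.find_min hex (by omega))
  have hln' : l < L ^ (n + 1) := by rw [hnN]; exact hN
  have hLn : (0:ℝ) < L ^ n := pow_pos hL0 _
  -- μ := l / L^n ∈ [1, L]
  set μ : ℝ := l / L ^ n with hμdef
  have hμ0 : 0 < μ := div_pos hl0 hLn
  have hμ1 : 1 ≤ μ := (one_le_div hLn).mpr hln
  have hμL : μ ≤ L := by
    rw [hμdef, div_le_iff₀ hLn, ← pow_succ']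
    exact hln'.le
  have hsplit : l = μ * L ^ n := by
    rw [hμdef, div_mul_cancel₀ _ hLn.ne']
  -- bound (L^n)^q ≤ K * l^q  using  l/L < L^n ≤ l
  have hub : l / L ≤ (L : ℝ) ^ n := by
    rw [div_le_iff₀ hL0, ← pow_succ]
    exact hln'.le
  have hpow : ((L : ℝ) ^ n) ^ q ≤ K * l ^ q := by
    rcases le_or_gt 0 q with hq | hq
    · have h1 : ((L : ℝ) ^ n) ^ q ≤ l ^ q := Real.rpow_le_rpow hLn.le hln hq
      exact le_trans h1 (le_mul_of_one_le_left (by positivity) hK1)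
    · have hlL0 : (0:ℝ) < l / L := div_pos hl0 hL0
      have h1 : ((L : ℝ) ^ n) ^ q ≤ (l / L) ^ q :=
        Real.rpow_le_rpow_of_nonpos hlL0 hub hq.le
      have h2 : (l / L : ℝ) ^ q = l ^ q * (L : ℝ) ^ (-q) := by
        rw [Real.div_rpow hl0.le hL0.le, Real.rpow_neg hL0.le, div_eq_mul_inv]
      refine le_trans h1 ?_
      rw [h2, mul_comm]
      exact mul_le_mul_of_nonneg_right (le_max_right _ _) (by positivity)
  have hclaim' : sPhi φ (L ^ n) ≤ ENNReal.ofReal (((L : ℝ) ^ n) ^ q) := by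
    have := hclaim (n - 1)
    rwa [Nat.sub_add_cancel hn1] at this
  calc sPhi φ l = sPhi φ (μ * L ^ n) := by rw [← hsplit]
    _ ≤ sPhi φ μ * sPhi φ (L ^ n) := sPhi_submul φ hφ hμ0 hLn
    _ ≤ ENNReal.ofReal B * ENNReal.ofReal (((L : ℝ) ^ n) ^ q) :=
        mul_le_mul' (hBb μ hμ1 hμL) hclaim'
    _ = ENNReal.ofReal (B * ((L : ℝ) ^ n) ^ q) := by
        rw [← ENNReal.ofReal_mul hB.le]
    _ ≤ ENNReal.ofReal (B * K * l ^ q) := by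
        refine ENNReal.ofReal_le_ofReal ?_
        rw [mul_assoc]
        exact mul_le_mul_of_nonneg_left hpow hB.le

lemma memI_to_memIo (φ : ℝ → ℝ) {a b c d : ℝ} (hac : a < c) (hdb : d < b)
    (h0 : ∃ C > (0:ℝ), ∃ δ > (0:ℝ), ∀ l : ℝ, 0 < l → l < δ →
      sPhi φ l ≤ ENNReal.ofReal (C * l ^ c))
    (hinf : ∃ C > (0:ℝ), ∃ M : ℝ, ∀ l : ℝ, M < l →
      sPhi φ l ≤ ENNReal.ofReal (C * l ^ d)) :
    (∀ ε > (0:ℝ), ∃ δ > (0:ℝ), ∀ l : ℝ, 0 < l → l < δ →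
      sPhi φ l ≤ ENNReal.ofReal (ε * l ^ a)) ∧
    (∀ ε > (0:ℝ), ∃ M : ℝ, ∀ l : ℝ, M < l →
      sPhi φ l ≤ ENNReal.ofReal (ε * l ^ b)) := by
  obtain ⟨C₀, hC₀, δ, hδ, hsmall⟩ := h0
  obtain ⟨C₁, hC₁, M, hlarge⟩ := hinf
  constructor
  · intro ε hε
    set r : ℝ := (ε / C₀) ^ (c - a)⁻¹ with hr
    have hr0 : 0 < r := Real.rpow_pos_of_pos (div_pos hε hC₀) _
    refine ⟨min δ r, lt_min hδ hr0, fun l hl0 hl => ?_⟩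
    have hlδ : l < δ := lt_of_lt_of_le hl (min_le_left _ _)
    have hlr : l < r := lt_of_lt_of_le hl (min_le_right _ _)
    refine le_trans (hsmall l hl0 hlδ) (ENNReal.ofReal_le_ofReal ?_)
    have hca : (0:ℝ) < c - a := by linarith
    have h1 : l ^ (c - a) < ε / C₀ := by
      have := Real.rpow_lt_rpow hl0.le hlr hca
      rwa [hr, Real.rpow_inv_rpow (div_pos hε hC₀).le (ne_of_gt hca)] at this
    have h2 : l ^ c = l ^ (c - a) * l ^ a := by
      rw [← Real.rpow_add hl0]; ring_nf
    rw [h2]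
    have hla : (0:ℝ) < l ^ a := Real.rpow_pos_of_pos hl0 a
    calc C₀ * (l ^ (c - a) * l ^ a) = (C₀ * l ^ (c - a)) * l ^ a := by ring
      _ ≤ ε * l ^ a := by
          refine mul_le_mul_of_nonneg_right ?_ hla.le
          calc C₀ * l ^ (c - a) ≤ C₀ * (ε / C₀) := by
                exact mul_le_mul_of_nonneg_left h1.le hC₀.le
            _ = ε := by field_simp
  · intro ε hε
    set r : ℝ := (C₁ / ε) ^ (b - d)⁻¹ with hr
    have hr0 : 0 < r := Real.rpow_pos_of_pos (div_pos hC₁ hε) _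
    refine ⟨max M (max r 0), fun l hl => ?_⟩
    have hlM : M < l := lt_of_le_of_lt (le_max_left _ _) hl
    have hlr : r < l := lt_of_le_of_lt (le_trans (le_max_left r 0) (le_max_right _ _)) hl
    have hl0 : (0:ℝ) < l := lt_of_le_of_lt (le_trans (le_max_right r 0) (le_max_right _ _)) hl
    refine le_trans (hlarge l hlM) (ENNReal.ofReal_le_ofReal ?_)
    have hbd : (0:ℝ) < b - d := by linarith
    have h1 : C₁ / ε < l ^ (b - d) := by
      have := Real.rpow_lt_rpow hr0.le hlr hbd
      rwa [hr, Real.rpow_inv_rpow (div_pos hC₁ hε).le (ne_of_gt hbd)] at this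
    have h2 : l ^ b = l ^ (b - d) * l ^ d := by
      rw [← Real.rpow_add hl0]; ring_nf
    rw [h2]
    have hld : (0:ℝ) < l ^ d := Real.rpow_pos_of_pos hl0 d
    calc C₁ * l ^ d = (C₁ / ε) * ε * l ^ d := by field_simp
      _ ≤ l ^ (b - d) * ε * l ^ d := by
          refine mul_le_mul_of_nonneg_right (mul_le_mul_of_nonneg_right h1.le hε.le) hld.le
      _ = ε * (l ^ (b - d) * l ^ d) := by ring

lemma ratio_le_of_sPhi_le (φ : ℝ → ℝ) {x Y t : ℝ} (ht : 0 < t) (hY : 0 ≤ Y)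
    (h : sPhi φ x ≤ ENNReal.ofReal Y) : φ (x * t) / φ t ≤ Y :=
  (ENNReal.ofReal_le_ofReal_iff hY).mp (le_trans (ratio_le_sPhi φ ht) h)

lemma memI_to_pointwise (φ : ℝ → ℝ) (hφ : ∀ t ∈ Set.Ioi (0:ℝ), 0 < φ t)
    {a b c d : ℝ} (hac : a < c) (hdb : d < b)
    (h0 : ∃ C > (0:ℝ), ∃ δ > (0:ℝ), ∀ l : ℝ, 0 < l → l < δ →
      sPhi φ l ≤ ENNReal.ofReal (C * l ^ c))
    (hinf : ∃ C > (0:ℝ), ∃ M : ℝ, ∀ l : ℝ, M < l →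
      sPhi φ l ≤ ENNReal.ofReal (C * l ^ d)) :
    ∃ ε > (0:ℝ), ∃ C > (0:ℝ), ∀ t ∈ Set.Ioi (0:ℝ), ∀ l : ℝ, 1 ≤ l →
      l ^ (a + ε) ≤ C * (φ (l * t) / φ t) ∧ φ (l * t) / φ t ≤ C * l ^ (b - ε) := by
  obtain ⟨C₀, hC₀, δ, hδ, hsmall⟩ := h0
  obtain ⟨C₁, hC₁, M, hlarge⟩ := hinf
  set ε : ℝ := min (c - a) (b - d) with hεdef
  have hε : 0 < ε := lt_min (by linarith) (by linarith)
  have hc' : a + ε ≤ c := by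
    have := min_le_left (c - a) (b - d); linarith
  have hd' : d ≤ b - ε := by
    have := min_le_right (c - a) (b - d); linarith
  set R : ℝ := max δ⁻¹ (max M 1) + 1 with hRdef
  have hR1 : (1:ℝ) < R := by
    rw [hRdef]
    have h1 := le_max_right M (1:ℝ)
    have h2 := le_max_right δ⁻¹ (max M 1)
    linarith
  have hR0 : (0:ℝ) < R := by linarith
  have hRδ : δ⁻¹ < R := by
    rw [hRdef]
    have := le_max_left δ⁻¹ (max M 1); linarith
  have hRM : M < R := by
    rw [hRdef]
    have h1 := le_max_left M (1:ℝ)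
    have h2 := le_max_right δ⁻¹ (max M 1)
    linarith
  obtain ⟨B, hB, hBb⟩ := sPhi_bddOn φ hφ hδ hC₀ hC₁ hsmall hlarge
    (inv_pos.mpr hR0) (le_trans (inv_le_one_of_one_le₀ hR1.le) hR1.le)
  set m : ℝ := min ((1:ℝ) ^ (b - ε)) (R ^ (b - ε)) with hm
  have hm0 : 0 < m := lt_min (by norm_num) (Real.rpow_pos_of_pos hR0 _)
  set K₂ : ℝ := max ((1:ℝ) ^ (a + ε)) (R ^ (a + ε)) with hK₂
  have hK₂0 : 0 < K₂ := lt_max_of_lt_left (by norm_num)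
  refine ⟨ε, hε, max (max C₁ (B / m)) (max C₀ (K₂ * B)), by positivity,
    fun t ht l hl1 => ?_⟩
  have ht' : (0:ℝ) < t := ht
  have hl0 : (0:ℝ) < l := lt_of_lt_of_le one_pos hl1
  have hlt : (0:ℝ) < l * t := mul_pos hl0 ht'
  have hr : (0:ℝ) < φ (l * t) / φ t := div_pos (hφ _ hlt) (hφ _ ht)
  set r : ℝ := φ (l * t) / φ t with hrdef
  have hinv_eq : l⁻¹ * (l * t) = t := by field_simp
  have hrs : (φ t / φ (l * t)) * r = 1 := by
    rw [hrdef, div_mul_div_cancel₀ (ne_of_gt (hφ _ hlt))]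
    exact div_self (ne_of_gt (hφ _ ht))
  have hCub : max C₁ (B / m) ≤ max (max C₁ (B / m)) (max C₀ (K₂ * B)) := le_max_left _ _
  have hClb : max C₀ (K₂ * B) ≤ max (max C₁ (B / m)) (max C₀ (K₂ * B)) := le_max_right _ _
  rcases le_or_gt l R with hlR | hlR
  -- case 1 ≤ l ≤ R
  · constructor
    · -- lower bound
      have hinvl : R⁻¹ ≤ l⁻¹ := by
        apply inv_anti₀ hl0 hlR
      have hinvl' : l⁻¹ ≤ R := le_trans (inv_le_one_of_one_le₀ hl1) hR1.le
      have hs : φ (l⁻¹ * (l * t)) / φ (l * t) ≤ B :=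
        ratio_le_of_sPhi_le φ hlt hB.le (hBb l⁻¹ hinvl hinvl')
      rw [hinv_eq] at hs
      have h1 : (1:ℝ) ≤ r * B := by
        calc (1:ℝ) = (φ t / φ (l * t)) * r := hrs.symm
          _ ≤ B * r := mul_le_mul_of_nonneg_right hs hr.le
          _ = r * B := mul_comm _ _
      have h2 : l ^ (a + ε) ≤ K₂ := rpow_le_max one_pos hl1 hlR
      calc l ^ (a + ε) ≤ K₂ := h2
        _ ≤ K₂ * (r * B) := le_mul_of_one_le_right hK₂0.le h1
        _ = (K₂ * B) * r := by ring
        _ ≤ max (max C₁ (B / m)) (max C₀ (K₂ * B)) * r := by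
            exact mul_le_mul_of_nonneg_right (le_trans (le_max_right C₀ _) hClb) hr.le
    · -- upper bound
      have hrB : r ≤ B := by
        have := ratio_le_of_sPhi_le φ ht' hB.le
          (hBb l (le_trans (inv_le_one_of_one_le₀ hR1.le) hl1) hlR)
        exact this
      have hml : m ≤ l ^ (b - ε) := min_le_rpow one_pos hl1 hlR
      calc r ≤ B := hrB
        _ = (B / m) * m := by field_simp
        _ ≤ (B / m) * l ^ (b - ε) := mul_le_mul_of_nonneg_left hml (by positivity)
        _ ≤ max (max C₁ (B / m)) (max C₀ (K₂ * B)) * l ^ (b - ε) := by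
            refine mul_le_mul_of_nonneg_right (le_trans (le_max_right C₁ _) hCub) ?_
            positivity
  -- case R < l
  · have hinvδ : l⁻¹ < δ := inv_lt_of_inv_lt₀ hδ (lt_trans hRδ hlR)
    have hinv0 : (0:ℝ) < l⁻¹ := inv_pos.mpr hl0
    constructor
    · -- lower bound
      have hs : φ (l⁻¹ * (l * t)) / φ (l * t) ≤ C₀ * (l⁻¹) ^ c :=
        ratio_le_of_sPhi_le φ hlt (by positivity) (hsmall l⁻¹ hinv0 hinvδ)
      rw [hinv_eq] at hs
      have hlc : (0:ℝ) < l ^ c := Real.rpow_pos_of_pos hl0 c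
      have hcancel : (l⁻¹ : ℝ) ^ c * l ^ c = 1 := by
        rw [Real.inv_rpow hl0.le]
        exact inv_mul_cancel₀ hlc.ne'
      have h1 : (1:ℝ) ≤ r * (C₀ * (l⁻¹) ^ c) := by
        calc (1:ℝ) = (φ t / φ (l * t)) * r := hrs.symm
          _ ≤ (C₀ * (l⁻¹) ^ c) * r := mul_le_mul_of_nonneg_right hs hr.le
          _ = r * (C₀ * (l⁻¹) ^ c) := mul_comm _ _
      have h2 : l ^ c ≤ C₀ * r := by
        have h3 : l ^ c * 1 ≤ l ^ c * (r * (C₀ * (l⁻¹) ^ c)) :=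
          mul_le_mul_of_nonneg_left h1 hlc.le
        calc l ^ c = l ^ c * 1 := (mul_one _).symm
          _ ≤ l ^ c * (r * (C₀ * (l⁻¹) ^ c)) := h3
          _ = (C₀ * r) * ((l⁻¹ : ℝ) ^ c * l ^ c) := by ring
          _ = C₀ * r := by rw [hcancel, mul_one]
      have h4 : l ^ (a + ε) ≤ l ^ c := Real.rpow_le_rpow_of_exponent_le hl1 hc'
      calc l ^ (a + ε) ≤ C₀ * r := le_trans h4 h2
        _ ≤ max (max C₁ (B / m)) (max C₀ (K₂ * B)) * r :=
            mul_le_mul_of_nonneg_right (le_trans (le_max_left C₀ _) hClb) hr.le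
    · -- upper bound
      have hs : r ≤ C₁ * l ^ d :=
        ratio_le_of_sPhi_le φ ht' (by positivity) (hlarge l (lt_trans hRM hlR))
      have h1 : l ^ d ≤ l ^ (b - ε) := Real.rpow_le_rpow_of_exponent_le hl1 hd'
      calc r ≤ C₁ * l ^ d := hs
        _ ≤ C₁ * l ^ (b - ε) := mul_le_mul_of_nonneg_left h1 hC₁.le
        _ ≤ max (max C₁ (B / m)) (max C₀ (K₂ * B)) * l ^ (b - ε) := by
            refine mul_le_mul_of_nonneg_right (le_trans (le_max_left C₁ _) hCub) ?_
            positivity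

lemma pointwise_to_memI (φ : ℝ → ℝ) (hφ : ∀ t ∈ Set.Ioi (0:ℝ), 0 < φ t)
    {a b ε C : ℝ} (hε : 0 < ε) (hC : 0 < C)
    (h : ∀ t ∈ Set.Ioi (0:ℝ), ∀ l : ℝ, 1 ≤ l →
      l ^ (a + ε) ≤ C * (φ (l * t) / φ t) ∧ φ (l * t) / φ t ≤ C * l ^ (b - ε)) :
    (∃ C' > (0:ℝ), ∃ δ > (0:ℝ), ∀ l : ℝ, 0 < l → l < δ →
      sPhi φ l ≤ ENNReal.ofReal (C' * l ^ (a + ε))) ∧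
    (∃ C' > (0:ℝ), ∃ M : ℝ, ∀ l : ℝ, M < l →
      sPhi φ l ≤ ENNReal.ofReal (C' * l ^ (b - ε))) := by
  constructor
  · refine ⟨C, hC, 1, one_pos, fun l hl0 hl1 => ?_⟩
    refine sPhi_le φ fun t ht => ?_
    have ht' : (0:ℝ) < t := ht
    have hlt : (0:ℝ) < l * t := mul_pos hl0 ht'
    have hinv1 : (1:ℝ) ≤ l⁻¹ := (one_le_inv₀ hl0).2 hl1.le
    have hkey := (h (l * t) hlt l⁻¹ hinv1).1
    have heq : l⁻¹ * (l * t) = t := by field_simp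
    rw [heq] at hkey
    -- hkey : (l⁻¹)^(a+ε) ≤ C * (φ t / φ (l*t))
    have hq : (0:ℝ) < φ t / φ (l * t) := div_pos (hφ _ ht) (hφ _ hlt)
    have hr : (0:ℝ) < φ (l * t) / φ t := div_pos (hφ _ hlt) (hφ _ ht)
    have hrs : (φ t / φ (l * t)) * (φ (l * t) / φ t) = 1 := by
      rw [div_mul_div_cancel₀ (ne_of_gt (hφ _ hlt))]
      exact div_self (ne_of_gt (hφ _ ht))
    have hla : (0:ℝ) < l ^ (a + ε) := Real.rpow_pos_of_pos hl0 _
    have hcancel : (l⁻¹ : ℝ) ^ (a + ε) * l ^ (a + ε) = 1 := by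
      rw [Real.inv_rpow hl0.le]
      exact inv_mul_cancel₀ hla.ne'
    -- multiply hkey by r * l^(a+ε)
    have h1 : (l⁻¹ : ℝ) ^ (a + ε) * ((φ (l * t) / φ t) * l ^ (a + ε)) ≤
        C * (φ t / φ (l * t)) * ((φ (l * t) / φ t) * l ^ (a + ε)) :=
      mul_le_mul_of_nonneg_right hkey (by positivity)
    calc φ (l * t) / φ t
        = (l⁻¹ : ℝ) ^ (a + ε) * ((φ (l * t) / φ t) * l ^ (a + ε)) := by
          rw [show (l⁻¹ : ℝ) ^ (a + ε) * ((φ (l * t) / φ t) * l ^ (a + ε)) =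
            ((l⁻¹ : ℝ) ^ (a + ε) * l ^ (a + ε)) * (φ (l * t) / φ t) by ring, hcancel,
            one_mul]
      _ ≤ C * (φ t / φ (l * t)) * ((φ (l * t) / φ t) * l ^ (a + ε)) := h1
      _ = C * ((φ t / φ (l * t)) * (φ (l * t) / φ t)) * l ^ (a + ε) := by ring
      _ = C * l ^ (a + ε) := by rw [hrs, mul_one]
  · refine ⟨C, hC, 1, fun l hl1 => ?_⟩
    refine sPhi_le φ fun t ht => (h t ht l hl1.le).2

/-- for `a < b`, `⋃_{c>a, d<b} I(c,d) = I_o(a,b)`; in particular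
`φ ∈ I_o(a,b)` iff there is `ε > 0` with `λ^{a+ε} ≲ φ(λt)/φ(t) ≲ λ^{b-ε}`
for all `t > 0`, `λ ≥ 1`. -/
theorem memIo_iff_union_memI (a b : ℝ) (hab : a < b)
    (φ : ℝ → ℝ) (hφ : ∀ t ∈ Set.Ioi (0:ℝ), 0 < φ t) :
    (memIo φ a b ↔ ∃ c d : ℝ, a < c ∧ d < b ∧ memI φ c d) ∧
    (memIo φ a b ↔ ∃ ε > (0:ℝ), ∃ C > (0:ℝ), ∀ t ∈ Set.Ioi (0:ℝ), ∀ l : ℝ, 1 ≤ l →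
      l ^ (a + ε) ≤ C * (φ (l * t) / φ t) ∧ φ (l * t) / φ t ≤ C * l ^ (b - ε)) := by
  have iff1 : memIo φ a b ↔ ∃ c d : ℝ, a < c ∧ d < b ∧ memI φ c d := by
    constructor
    · rintro ⟨h0, hinf⟩
      obtain ⟨c, hc, C, hC, δ, hδ, hsm⟩ := memIo_zero_to_memI φ hφ h0 hinf
      obtain ⟨d, hd, C', hC', M, hlg⟩ := memIo_inf_to_memI φ hφ h0 hinf
      exact ⟨c, d, hc, hd, ⟨C, hC, δ, hδ, hsm⟩, ⟨C', hC', M, hlg⟩⟩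
    · rintro ⟨c, d, hac, hdb, hI⟩
      exact memI_to_memIo φ hac hdb hI.1 hI.2
  refine ⟨iff1, ?_⟩
  constructor
  · intro hIo
    obtain ⟨c, d, hac, hdb, hI⟩ := iff1.mp hIo
    exact memI_to_pointwise φ hφ hac hdb hI.1 hI.2
  · rintro ⟨ε, hε, C, hC, h⟩
    refine iff1.mpr ⟨a + ε, b - ε, by linarith, by linarith, ?_⟩
    exact pointwise_to_memI φ hφ hε hC h
end

section
/- If p ≥ 0 and φ ∈ I_o(0,p), then ∫_0^∞ (min(1, x/t))^p φ(t) dt/t ≲ φ(x) for all x > 0, with implicit constant independent of x. -/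
open Real MeasureTheory Set Filter ENNReal

lemma le_sPhi' (φ : ℝ → ℝ) (l t : ℝ) (ht : 0 < t) :
    ENNReal.ofReal (φ (l * t) / φ t) ≤ sPhi φ l :=
  le_iSup₂ (f := fun t _ => ENNReal.ofReal (φ (l * t) / φ t)) t ht

lemma ofReal_le_sPhi_mul' (φ : ℝ → ℝ) (hφ : ∀ t ∈ Set.Ioi (0:ℝ), 0 < φ t)
    (l t : ℝ) (hl : 0 < l) (ht : 0 < t) :
    ENNReal.ofReal (φ (l * t)) ≤ sPhi φ l * ENNReal.ofReal (φ t) := by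
  have hpt : 0 < φ t := hφ t ht
  have h : φ (l * t) = φ (l * t) / φ t * φ t := by field_simp
  rw [h, ENNReal.ofReal_mul (div_nonneg (hφ _ (mul_pos hl ht)).le hpt.le)]
  exact mul_le_mul_left (le_sPhi' φ l t ht) _

lemma sPhi_mul_le' (φ : ℝ → ℝ) (hφ : ∀ t ∈ Set.Ioi (0:ℝ), 0 < φ t)
    (a b : ℝ) (ha : 0 < a) (hb : 0 < b) :
    sPhi φ (a * b) ≤ sPhi φ a * sPhi φ b := by
  refine iSup₂_le fun t ht => ?_
  have ht' : (0:ℝ) < t := ht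
  have hbt : 0 < b * t := mul_pos hb ht'
  have hbt' : φ (b * t) ≠ 0 := (hφ _ hbt).ne'
  have h1 : φ (a * b * t) / φ t = φ (a * (b * t)) / φ (b * t) * (φ (b * t) / φ t) := by
    rw [mul_assoc, div_mul_div_comm, mul_comm (φ (a * (b * t))) (φ (b * t)),
      mul_div_mul_left _ _ hbt']
  rw [h1, ENNReal.ofReal_mul (div_nonneg (hφ _ (mul_pos ha hbt)).le (hφ _ hbt).le)]
  exact mul_le_mul' (le_sPhi' φ a (b * t) hbt) (le_sPhi' φ b t ht')

set_option maxHeartbeats 1600000 in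
/-- if `p ≥ 0` and `φ ∈ I_o(0,p)`, then
`∫_0^∞ (min(1, x/t))^p φ(t) dt/t ≲ φ(x)` uniformly in `x > 0`. -/
theorem lintegral_min_rpow_le_of_memIo_zero (p : ℝ) (hp : 0 ≤ p)
    (φ : ℝ → ℝ) (hφ : ∀ t ∈ Set.Ioi (0:ℝ), 0 < φ t) (h : memIo φ 0 p) :
    ∃ C > (0:ℝ), ∀ x > (0:ℝ),
      ∫⁻ t in Set.Ioi (0:ℝ), ENNReal.ofReal ((min 1 (x / t)) ^ p * φ t / t) ≤
        ENNReal.ofReal (C * φ x) := by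
  obtain ⟨δ, hδ, hsmall0⟩ := h.1 (1/2) (by norm_num)
  obtain ⟨M, hbig⟩ := h.2 (1/2) (by norm_num)
  have hsmall : ∀ l : ℝ, 0 < l → l < δ → sPhi φ l ≤ ENNReal.ofReal (1/2) := by
    intro l h1 h2
    simpa [Real.rpow_zero] using hsmall0 l h1 h2
  set c : ℝ := min (δ/2) (1/(2 * max M 1)) with hc_def
  have hmax1 : (1:ℝ) ≤ max M 1 := le_max_right _ _
  have hmaxM : M ≤ max M 1 := le_max_left _ _
  have hmaxpos : (0:ℝ) < 2 * max M 1 := by linarith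
  have hc0 : 0 < c := lt_min (by linarith) (by positivity)
  have hcδ : c < δ := lt_of_le_of_lt (min_le_left _ _) (by linarith)
  have hchalf : c ≤ 1/2 := le_trans (min_le_right _ _) (by
    rw [div_le_div_iff₀ hmaxpos (by norm_num)]
    nlinarith)
  have hc1 : c < 1 := lt_of_le_of_lt hchalf (by norm_num)
  have hcA : c * (2 * max M 1) ≤ 1 := by
    have h1 : c ≤ 1/(2 * max M 1) := min_le_right _ _
    exact (le_div_iff₀ hmaxpos).1 h1
  have hcM : M < c⁻¹ := by
    have : M < 1/c := (lt_div_iff₀ hc0).2 (by nlinarith)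
    simpa [one_div] using this
  set R : ℝ := 2 * max M 1 with hR_def
  have hR1 : (1:ℝ) < R := by rw [hR_def]; nlinarith
  have hR0 : (0:ℝ) < R := by linarith
  have hRM : M < R := by rw [hR_def]; nlinarith
  set K : ℝ := c⁻¹ ^ p / 4 with hK_def
  have hKrp : (0:ℝ) < c⁻¹ ^ p := Real.rpow_pos_of_pos (inv_pos.2 hc0) p
  have hK : 0 < K := by rw [hK_def]; positivity
  -- Lemma A : uniform bound on (0,1]
  have hA : ∀ l : ℝ, 0 < l → l ≤ 1 → sPhi φ l ≤ ENNReal.ofReal K := by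
    intro l hl0 hl1
    have hlc : 0 < l * c := mul_pos hl0 hc0
    have hlcδ : l * c < δ := lt_of_le_of_lt (by nlinarith) hcδ
    have heq : l = l * c * c⁻¹ := by field_simp
    calc sPhi φ l = sPhi φ (l * c * c⁻¹) := by rw [← heq]
      _ ≤ sPhi φ (l * c) * sPhi φ c⁻¹ := sPhi_mul_le' φ hφ _ _ hlc (by positivity)
      _ ≤ ENNReal.ofReal (1/2) * ENNReal.ofReal (1/2 * c⁻¹ ^ p) :=
          mul_le_mul' (hsmall _ hlc hlcδ) (hbig _ hcM)
      _ = ENNReal.ofReal K := by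
          rw [← ENNReal.ofReal_mul (by norm_num), hK_def]
          congr 1
          ring
  -- Lemma B : geometric decay at 0
  have hB : ∀ n : ℕ, ∀ l : ℝ, 0 < l → l ≤ c ^ n →
      sPhi φ l ≤ ENNReal.ofReal (K * (1/2) ^ n) := by
    intro n
    induction n with
    | zero => intro l hl0 hl1; simpa using hA l hl0 (by simpa using hl1)
    | succ n ih =>
        intro l hl0 hln
        have hlc0 : 0 < l / c := div_pos hl0 hc0
        have hlcn : l / c ≤ c ^ n := by
          rw [div_le_iff₀ hc0]; rw [pow_succ] at hln; exact hln
        have heq : l = l / c * c := by field_simp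
        calc sPhi φ l = sPhi φ (l / c * c) := by rw [← heq]
          _ ≤ sPhi φ (l / c) * sPhi φ c := sPhi_mul_le' φ hφ _ _ hlc0 hc0
          _ ≤ ENNReal.ofReal (K * (1/2) ^ n) * ENNReal.ofReal (1/2) :=
              mul_le_mul' (ih (l / c) hlc0 hlcn) (hsmall c hc0 hcδ)
          _ = ENNReal.ofReal (K * (1/2) ^ (n+1)) := by
              rw [← ENNReal.ofReal_mul (by positivity)]
              ring_nf
  -- Lemma A' : bound K * l^p for l ≥ 1
  have hA' : ∀ l : ℝ, 1 ≤ l → sPhi φ l ≤ ENNReal.ofReal (K * l ^ p) := by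
    intro l hl1
    have hl0 : 0 < l := lt_of_lt_of_le one_pos hl1
    have hlc : 0 < l / c := div_pos hl0 hc0
    have hlcM : M < l / c := by
      calc M < c⁻¹ := hcM
        _ = 1 / c := by rw [one_div]
        _ ≤ l / c := by gcongr
    have heq : l = c * (l / c) := by field_simp
    calc sPhi φ l = sPhi φ (c * (l / c)) := by rw [← heq]
      _ ≤ sPhi φ c * sPhi φ (l / c) := sPhi_mul_le' φ hφ _ _ hc0 hlc
      _ ≤ ENNReal.ofReal (1/2) * ENNReal.ofReal (1/2 * (l / c) ^ p) :=
          mul_le_mul' (hsmall c hc0 hcδ) (hbig _ hlcM)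
      _ = ENNReal.ofReal (K * l ^ p) := by
          rw [← ENNReal.ofReal_mul (by norm_num)]
          congr 1
          have hcp : (0:ℝ) < c ^ p := Real.rpow_pos_of_pos hc0 p
          rw [Real.div_rpow hl0.le hc0.le, hK_def, Real.inv_rpow hc0.le]
          field_simp
          ring_nf
  -- Lemma B' : geometric decay at ∞
  have hB' : ∀ n : ℕ, ∀ l : ℝ, R ^ n ≤ l →
      sPhi φ l ≤ ENNReal.ofReal (K * (1/2) ^ n * l ^ p) := by
    intro n
    induction n with
    | zero => intro l hl; simpa using hA' l (by simpa using hl)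
    | succ n ih =>
        intro l hln
        have hRn1 : (1:ℝ) ≤ R ^ (n+1) := one_le_pow₀ hR1.le
        have hl0 : 0 < l := lt_of_lt_of_le one_pos (le_trans hRn1 hln)
        have hlR : R ^ n ≤ l / R := by
          rw [le_div_iff₀ hR0]; rw [pow_succ] at hln; exact hln
        have hlR0 : 0 < l / R := div_pos hl0 hR0
        have heq : l = R * (l / R) := by field_simp
        calc sPhi φ l = sPhi φ (R * (l / R)) := by rw [← heq]
          _ ≤ sPhi φ R * sPhi φ (l / R) := sPhi_mul_le' φ hφ _ _ hR0 hlR0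
          _ ≤ ENNReal.ofReal (1/2 * R ^ p) * ENNReal.ofReal (K * (1/2) ^ n * (l / R) ^ p) :=
              mul_le_mul' (hbig R hRM) (ih (l / R) hlR)
          _ = ENNReal.ofReal (K * (1/2) ^ (n+1) * l ^ p) := by
              rw [← ENNReal.ofReal_mul (by positivity)]
              congr 1
              rw [Real.div_rpow hl0.le hR0.le]
              have hRp : (0:ℝ) < R ^ p := Real.rpow_pos_of_pos hR0 p
              field_simp
              ring
  -- the constant
  refine ⟨2 * K * (1 - c) / c + 2 * K * (R - 1), by
    have h1 : (0:ℝ) < 1 - c := by linarith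
    have h2 : (0:ℝ) < R - 1 := by linarith
    positivity, ?_⟩
  intro x hx
  have hφx : 0 < φ x := hφ x hx
  -- split the domain
  rw [← Set.Ioc_union_Ioi_eq_Ioi hx.le]
  refine le_trans (MeasureTheory.lintegral_union_le _ _ _) ?_
  have hgeo : ∑' n : ℕ, (ENNReal.ofReal (1/2)) ^ n = 2 := by
    have h12 : ENNReal.ofReal (1/2) = 2⁻¹ := by
      rw [one_div, ENNReal.ofReal_inv_of_pos two_pos, ENNReal.ofReal_ofNat]
    rw [ENNReal.tsum_geometric, h12, ENNReal.one_sub_inv_two, inv_inv]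
  -- lower part
  have hI1 : ∫⁻ t in Set.Ioc (0:ℝ) x, ENNReal.ofReal ((min 1 (x / t)) ^ p * φ t / t) ≤
      ENNReal.ofReal (2 * K * (1 - c) / c * φ x) := by
    have hdecomp : Set.Ioc (0:ℝ) x = ⋃ n : ℕ, Set.Ioc (x * c ^ (n+1)) (x * c ^ n) := by
      ext t
      simp only [Set.mem_Ioc, Set.mem_iUnion]
      constructor
      · rintro ⟨ht0, htx⟩
        have hex : ∃ n : ℕ, x * c ^ n < t := by
          obtain ⟨n, hn⟩ := exists_pow_lt_of_lt_one (div_pos ht0 hx) hc1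
          exact ⟨n, by rw [mul_comm]; exact (lt_div_iff₀ hx).1 hn⟩
        have hspec := Nat.find_spec hex
        have hne0 : Nat.find hex ≠ 0 := by
          intro h0
          rw [h0] at hspec
          simp at hspec
          linarith
        have hpos : 0 < Nat.find hex := Nat.pos_of_ne_zero hne0
        refine ⟨Nat.find hex - 1, ?_, ?_⟩
        · rw [Nat.sub_add_cancel hpos]; exact hspec
        · exact not_lt.1 (Nat.find_min hex (Nat.sub_lt hpos one_pos))
      · rintro ⟨n, h1, h2⟩
        have hxc : 0 < x * c ^ (n+1) := by positivity
        refine ⟨lt_trans hxc h1, le_trans h2 ?_⟩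
        calc x * c ^ n ≤ x * 1 := by
              gcongr
              exact pow_le_one₀ hc0.le hc1.le
          _ = x := mul_one x
    rw [hdecomp]
    refine le_trans (MeasureTheory.lintegral_iUnion_le _ _) ?_
    have hpiece : ∀ n : ℕ,
        ∫⁻ t in Set.Ioc (x * c ^ (n+1)) (x * c ^ n),
          ENNReal.ofReal ((min 1 (x / t)) ^ p * φ t / t) ≤
        ENNReal.ofReal (K * (1 - c) / c * φ x) * (ENNReal.ofReal (1/2)) ^ n := by
      intro n
      have hcn1 : (0:ℝ) < c ^ (n+1) := by positivity
      have hcn : (0:ℝ) < c ^ n := by positivity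
      have hbound : ∀ t ∈ Set.Ioc (x * c ^ (n+1)) (x * c ^ n),
          ENNReal.ofReal ((min 1 (x / t)) ^ p * φ t / t) ≤
          ENNReal.ofReal (K * (1/2) ^ n * φ x / (x * c ^ (n+1))) := by
        intro t ht
        obtain ⟨ht1, ht2⟩ := ht
        have ht0 : 0 < t := lt_trans (by positivity) ht1
        have htx : t ≤ x := le_trans ht2 (by
          calc x * c ^ n ≤ x * 1 := by gcongr; exact pow_le_one₀ hc0.le hc1.le
            _ = x := mul_one x)
        have hmin : min 1 (x / t) = 1 := min_eq_left ((one_le_div ht0).2 htx)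
        rw [hmin, Real.one_rpow, one_mul]
        -- bound φ t
        have hlb : φ t ≤ K * (1/2) ^ n * φ x := by
          have hlx : 0 < t / x := div_pos ht0 hx
          have hlxc : t / x ≤ c ^ n := (div_le_iff₀ hx).2 (by rw [mul_comm]; exact ht2)
          have hkey : ENNReal.ofReal (φ t) ≤ ENNReal.ofReal (K * (1/2) ^ n * φ x) := by
            calc ENNReal.ofReal (φ t) = ENNReal.ofReal (φ (t / x * x)) := by
                  rw [div_mul_cancel₀ _ hx.ne']
              _ ≤ sPhi φ (t / x) * ENNReal.ofReal (φ x) := ofReal_le_sPhi_mul' φ hφ _ _ hlx hx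
              _ ≤ ENNReal.ofReal (K * (1/2) ^ n) * ENNReal.ofReal (φ x) :=
                  mul_le_mul_left (hB n _ hlx hlxc) _
              _ = ENNReal.ofReal (K * (1/2) ^ n * φ x) := by
                  rw [← ENNReal.ofReal_mul (by positivity)]
          exact (ENNReal.ofReal_le_ofReal_iff (by positivity)).1 hkey
        apply ENNReal.ofReal_le_ofReal
        exact div_le_div₀ (by positivity) hlb (by positivity) ht1.le
      calc ∫⁻ t in Set.Ioc (x * c ^ (n+1)) (x * c ^ n),
            ENNReal.ofReal ((min 1 (x / t)) ^ p * φ t / t)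
          ≤ ∫⁻ _ in Set.Ioc (x * c ^ (n+1)) (x * c ^ n),
            ENNReal.ofReal (K * (1/2) ^ n * φ x / (x * c ^ (n+1))) :=
            MeasureTheory.setLIntegral_mono' measurableSet_Ioc hbound
        _ = ENNReal.ofReal (K * (1/2) ^ n * φ x / (x * c ^ (n+1))) *
            ENNReal.ofReal (x * c ^ n - x * c ^ (n+1)) := by
            rw [MeasureTheory.setLIntegral_const, Real.volume_Ioc]
        _ = ENNReal.ofReal (K * (1/2) ^ n * φ x / (x * c ^ (n+1)) *
            (x * c ^ n - x * c ^ (n+1))) := by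
            rw [← ENNReal.ofReal_mul (by positivity)]
        _ = ENNReal.ofReal (K * (1 - c) / c * φ x * (1/2) ^ n) := by
            congr 1
            have hxc : x * c ^ (n+1) ≠ 0 := by positivity
            field_simp
            ring
        _ = ENNReal.ofReal (K * (1 - c) / c * φ x) * (ENNReal.ofReal (1/2)) ^ n := by
            rw [ENNReal.ofReal_mul (by
              have h1 : (0:ℝ) < 1 - c := by linarith
              positivity), ENNReal.ofReal_pow (by norm_num)]
    calc ∑' n : ℕ, ∫⁻ t in Set.Ioc (x * c ^ (n+1)) (x * c ^ n),
          ENNReal.ofReal ((min 1 (x / t)) ^ p * φ t / t)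
        ≤ ∑' n : ℕ, ENNReal.ofReal (K * (1 - c) / c * φ x) * (ENNReal.ofReal (1/2)) ^ n :=
          ENNReal.tsum_le_tsum hpiece
      _ = ENNReal.ofReal (K * (1 - c) / c * φ x) * 2 := by
          rw [ENNReal.tsum_mul_left, hgeo]
      _ = ENNReal.ofReal (2 * K * (1 - c) / c * φ x) := by
          rw [← ENNReal.ofReal_ofNat 2, ← ENNReal.ofReal_mul (by
            have h1 : (0:ℝ) < 1 - c := by linarith
            positivity)]
          congr 1
          ring
  -- upper part
  have hI2 : ∫⁻ t in Set.Ioi x, ENNReal.ofReal ((min 1 (x / t)) ^ p * φ t / t) ≤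
      ENNReal.ofReal (2 * K * (R - 1) * φ x) := by
    have hdecomp : Set.Ioi x = ⋃ n : ℕ, Set.Ioc (x * R ^ n) (x * R ^ (n+1)) := by
      ext t
      simp only [Set.mem_Ioi, Set.mem_Ioc, Set.mem_iUnion]
      constructor
      · intro htx
        have ht0 : 0 < t := lt_trans hx htx
        have hex : ∃ n : ℕ, t ≤ x * R ^ n := by
          obtain ⟨n, hn⟩ := pow_unbounded_of_one_lt (t / x) hR1
          exact ⟨n, by rw [mul_comm]; exact ((div_le_iff₀ hx).1 (le_of_lt hn))⟩
        have hspec := Nat.find_spec hex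
        have hne0 : Nat.find hex ≠ 0 := by
          intro h0
          rw [h0] at hspec
          simp at hspec
          linarith
        have hpos : 0 < Nat.find hex := Nat.pos_of_ne_zero hne0
        refine ⟨Nat.find hex - 1, ?_, ?_⟩
        · exact not_le.1 (Nat.find_min hex (Nat.sub_lt hpos one_pos))
        · rw [Nat.sub_add_cancel hpos]; exact hspec
      · rintro ⟨n, h1, h2⟩
        have hRn : (1:ℝ) ≤ R ^ n := one_le_pow₀ hR1.le
        calc x = x * 1 := (mul_one x).symm
          _ ≤ x * R ^ n := by gcongr
          _ < t := h1
    rw [hdecomp]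
    refine le_trans (MeasureTheory.lintegral_iUnion_le _ _) ?_
    have hpiece : ∀ n : ℕ,
        ∫⁻ t in Set.Ioc (x * R ^ n) (x * R ^ (n+1)),
          ENNReal.ofReal ((min 1 (x / t)) ^ p * φ t / t) ≤
        ENNReal.ofReal (K * (R - 1) * φ x) * (ENNReal.ofReal (1/2)) ^ n := by
      intro n
      have hRn : (0:ℝ) < R ^ n := by positivity
      have hRn1 : (1:ℝ) ≤ R ^ n := one_le_pow₀ hR1.le
      have hbound : ∀ t ∈ Set.Ioc (x * R ^ n) (x * R ^ (n+1)),
          ENNReal.ofReal ((min 1 (x / t)) ^ p * φ t / t) ≤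
          ENNReal.ofReal (K * (1/2) ^ n * φ x / (x * R ^ n)) := by
        intro t ht
        obtain ⟨ht1, ht2⟩ := ht
        have hxRn : 0 < x * R ^ n := by positivity
        have ht0 : 0 < t := lt_trans hxRn ht1
        have htx : x ≤ t := by
          calc x = x * 1 := (mul_one x).symm
            _ ≤ x * R ^ n := by gcongr
            _ ≤ t := ht1.le
        have hmin : min 1 (x / t) = x / t := min_eq_right ((div_le_one ht0).2 htx)
        rw [hmin]
        -- bound φ t
        have hlx : 0 < t / x := div_pos ht0 hx
        have hlxR : R ^ n ≤ t / x := (le_div_iff₀ hx).2 (by rw [mul_comm] at ht1; exact ht1.le)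
        have hlb : φ t ≤ K * (1/2) ^ n * (t / x) ^ p * φ x := by
          have hkey : ENNReal.ofReal (φ t) ≤
              ENNReal.ofReal (K * (1/2) ^ n * (t / x) ^ p * φ x) := by
            calc ENNReal.ofReal (φ t) = ENNReal.ofReal (φ (t / x * x)) := by
                  rw [div_mul_cancel₀ _ hx.ne']
              _ ≤ sPhi φ (t / x) * ENNReal.ofReal (φ x) := ofReal_le_sPhi_mul' φ hφ _ _ hlx hx
              _ ≤ ENNReal.ofReal (K * (1/2) ^ n * (t / x) ^ p) * ENNReal.ofReal (φ x) :=
                  mul_le_mul_left (hB' n _ hlxR) _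
              _ = ENNReal.ofReal (K * (1/2) ^ n * (t / x) ^ p * φ x) := by
                  rw [← ENNReal.ofReal_mul (by positivity)]
          exact (ENNReal.ofReal_le_ofReal_iff (by positivity)).1 hkey
        apply ENNReal.ofReal_le_ofReal
        have hstep1 : (x / t) ^ p * φ t / t ≤
            (x / t) ^ p * (K * (1/2) ^ n * (t / x) ^ p * φ x) / t := by
          gcongr
        refine le_trans hstep1 ?_
        have hone : (x / t) ^ p * (t / x) ^ p = 1 := by
          rw [← Real.mul_rpow (by positivity) (by positivity)]
          rw [show x / t * (t / x) = 1 by field_simp]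
          exact Real.one_rpow p
        have heq2 : (x / t) ^ p * (K * (1/2) ^ n * (t / x) ^ p * φ x) / t =
            K * (1/2) ^ n * φ x / t := by
          rw [show (x / t) ^ p * (K * (1/2) ^ n * (t / x) ^ p * φ x) =
            ((x / t) ^ p * (t / x) ^ p) * (K * (1/2) ^ n * φ x) by ring, hone, one_mul]
        rw [heq2]
        gcongr
      calc ∫⁻ t in Set.Ioc (x * R ^ n) (x * R ^ (n+1)),
            ENNReal.ofReal ((min 1 (x / t)) ^ p * φ t / t)
          ≤ ∫⁻ _ in Set.Ioc (x * R ^ n) (x * R ^ (n+1)),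
            ENNReal.ofReal (K * (1/2) ^ n * φ x / (x * R ^ n)) :=
            MeasureTheory.setLIntegral_mono' measurableSet_Ioc hbound
        _ = ENNReal.ofReal (K * (1/2) ^ n * φ x / (x * R ^ n)) *
            ENNReal.ofReal (x * R ^ (n+1) - x * R ^ n) := by
            rw [MeasureTheory.setLIntegral_const, Real.volume_Ioc]
        _ = ENNReal.ofReal (K * (1/2) ^ n * φ x / (x * R ^ n) *
            (x * R ^ (n+1) - x * R ^ n)) := by
            rw [← ENNReal.ofReal_mul (by positivity)]
        _ = ENNReal.ofReal (K * (R - 1) * φ x * (1/2) ^ n) := by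
            congr 1
            field_simp
            ring
        _ = ENNReal.ofReal (K * (R - 1) * φ x) * (ENNReal.ofReal (1/2)) ^ n := by
            rw [ENNReal.ofReal_mul (by
              have h2 : (0:ℝ) < R - 1 := by linarith
              positivity), ENNReal.ofReal_pow (by norm_num)]
    calc ∑' n : ℕ, ∫⁻ t in Set.Ioc (x * R ^ n) (x * R ^ (n+1)),
          ENNReal.ofReal ((min 1 (x / t)) ^ p * φ t / t)
        ≤ ∑' n : ℕ, ENNReal.ofReal (K * (R - 1) * φ x) * (ENNReal.ofReal (1/2)) ^ n :=
          ENNReal.tsum_le_tsum hpiece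
      _ = ENNReal.ofReal (K * (R - 1) * φ x) * 2 := by
          rw [ENNReal.tsum_mul_left, hgeo]
      _ = ENNReal.ofReal (2 * K * (R - 1) * φ x) := by
          rw [← ENNReal.ofReal_ofNat 2, ← ENNReal.ofReal_mul (by
            have h2 : (0:ℝ) < R - 1 := by linarith
            positivity)]
          congr 1
          ring
  calc (∫⁻ t in Set.Ioc (0:ℝ) x, ENNReal.ofReal ((min 1 (x / t)) ^ p * φ t / t)) +
        ∫⁻ t in Set.Ioi x, ENNReal.ofReal ((min 1 (x / t)) ^ p * φ t / t)
      ≤ ENNReal.ofReal (2 * K * (1 - c) / c * φ x) +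
        ENNReal.ofReal (2 * K * (R - 1) * φ x) := add_le_add hI1 hI2
    _ = ENNReal.ofReal ((2 * K * (1 - c) / c + 2 * K * (R - 1)) * φ x) := by
        rw [← ENNReal.ofReal_add (by
          have h1 : (0:ℝ) < 1 - c := by linarith
          positivity) (by
          have h2 : (0:ℝ) < R - 1 := by linarith
          positivity)]
        congr 1
        ring
end

section
/- If κ: (0,∞) → (0,∞) belongs to I_o(−1,0), then its Laplace transform L[κ](λ) = ∫_0^∞ e^{−λt} κ(t) dt is finite for all λ > 0 and satisfies L[κ](λ) ≃ κ(λ^{−1})/λ, with equivalence constants uniform in λ. -/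
open Real MeasureTheory Set Filter ENNReal

lemma my_lintegral_rpow_Ioc {T p : ℝ} (hT : 0 < T) (hp : 0 < p) :
    ∫⁻ t in Set.Ioc (0:ℝ) T, ENNReal.ofReal (t ^ (p-1)) = ENNReal.ofReal (T^p / p) := by
  rw [← ofReal_integral_eq_lintegral_ofReal]
  · congr 1
    rw [← intervalIntegral.integral_of_le hT.le,
      integral_rpow (Or.inl (by linarith : (-1:ℝ) < p - 1))]
    rw [Real.zero_rpow (by intro hc; linarith : p - 1 + 1 ≠ 0)]
    ring_nf
  · exact (intervalIntegrable_iff_integrableOn_Ioc_of_le hT.le).mp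
      (intervalIntegral.intervalIntegrable_rpow' (by linarith))
  · filter_upwards [ae_restrict_mem measurableSet_Ioc] with t ht
    exact Real.rpow_nonneg ht.1.le _

lemma my_lintegral_exp_Ioi {l : ℝ} (hl : 0 < l) {T : ℝ} (hT : 0 ≤ T) :
    ∫⁻ t in Set.Ioi T, ENNReal.ofReal (Real.exp (-(l*t))) ≤ ENNReal.ofReal (1/l) := by
  calc ∫⁻ t in Set.Ioi T, ENNReal.ofReal (Real.exp (-(l*t)))
      ≤ ∫⁻ t in Set.Ioi (0:ℝ), ENNReal.ofReal (Real.exp (-(l*t))) :=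
        lintegral_mono_set (Ioi_subset_Ioi hT)
    _ = ENNReal.ofReal (∫ t in Set.Ioi (0:ℝ), Real.exp (-(l*t))) := by
        rw [ofReal_integral_eq_lintegral_ofReal]
        · have := exp_neg_integrableOn_Ioi 0 hl
          simp only [neg_mul] at this
          exact this
        · filter_upwards with t using (Real.exp_pos _).le
    _ ≤ ENNReal.ofReal (1/l) := by
        apply ENNReal.ofReal_le_ofReal
        have : (∫ t in Set.Ioi (0:ℝ), Real.exp (-(l*t)))
            = l⁻¹ • ∫ x in Set.Ioi (l*0:ℝ), Real.exp (-x) := by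
          rw [← MeasureTheory.integral_comp_mul_left_Ioi (fun x => Real.exp (-x)) 0 hl]
        rw [this, mul_zero, integral_exp_neg_Ioi, neg_zero, Real.exp_zero, smul_eq_mul,
          mul_one, one_div]

lemma sPhi_bound {κ : ℝ → ℝ} (hκ : ∀ t ∈ Set.Ioi (0:ℝ), 0 < κ t) {l c : ℝ} (hc : 0 ≤ c)
    (h : sPhi κ l ≤ ENNReal.ofReal c) {t : ℝ} (ht : 0 < t) : κ (l * t) ≤ c * κ t := by
  have h1 : ENNReal.ofReal (κ (l*t) / κ t) ≤ sPhi κ l :=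
    le_iSup₂ (f := fun (t : ℝ) (_ : t ∈ Set.Ioi (0:ℝ)) => ENNReal.ofReal (κ (l * t) / κ t))
      t (mem_Ioi.mpr ht)
  have h2 : κ (l*t) / κ t ≤ c := (ENNReal.ofReal_le_ofReal_iff hc).mp (h1.trans h)
  exact (div_le_iff₀ (hκ t ht)).mp h2

lemma exists_bounds {κ : ℝ → ℝ} (hκ : ∀ t ∈ Set.Ioi (0:ℝ), 0 < κ t) (h : memIo κ (-1) 0) :
    ∃ b ≥ (1:ℝ), ∃ ρ : ℝ, 0 < ρ ∧ ρ ≤ 1 ∧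
      (∀ s : ℝ, 0 < s → s ≤ 1 → ∀ t : ℝ, 0 < t → κ (s*t) ≤ b * s^(ρ-1) * κ t) ∧
      (∀ s : ℝ, 1 ≤ s → ∀ t : ℝ, 0 < t → κ (s*t) ≤ b * κ t) := by
  obtain ⟨δ₁, hδ₁, H1⟩ := h.1 (1/2) (by norm_num)
  obtain ⟨M₀, H2⟩ := h.2 1 one_pos
  obtain ⟨a, ha0, haδ, ha4⟩ : ∃ a : ℝ, 0 < a ∧ a < δ₁ ∧ a ≤ 1/4 :=
    ⟨min (δ₁/2) (1/4), lt_min (by linarith) (by norm_num),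
      lt_of_le_of_lt (min_le_left _ _) (by linarith), min_le_right _ _⟩
  have ha1 : a < 1 := by linarith
  have hainv4 : (4:ℝ) ≤ a⁻¹ := by
    rw [le_inv_comm₀ (by norm_num) ha0]; simpa using ha4
  obtain ⟨b, hbM, hbinva⟩ : ∃ b : ℝ, M₀ < b ∧ a⁻¹ < b :=
    ⟨max M₀ a⁻¹ + 1, by have := le_max_left M₀ a⁻¹; linarith,
      by have := le_max_right M₀ a⁻¹; linarith⟩
  have hb1 : (1:ℝ) < b := by linarith
  have hb0 : 0 < b := by linarith
  have hbia : b⁻¹ < a := by rw [inv_lt_comm₀ hb0 ha0]; exact hbinva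
  have hbi0 : 0 < b⁻¹ := by positivity
  -- small regime
  have Hsm : ∀ l : ℝ, 0 < l → l < δ₁ → ∀ t : ℝ, 0 < t → κ (l*t) ≤ 1/(2*l) * κ t := by
    intro l hl hlδ t ht
    have := sPhi_bound hκ (c := 1/2 * l ^ (-1:ℝ)) (by positivity) (H1 l hl hlδ) ht
    rwa [Real.rpow_neg_one, show (1:ℝ)/2 * l⁻¹ = 1/(2*l) by field_simp] at this
  -- large regime
  have Hlg : ∀ l : ℝ, M₀ < l → ∀ t : ℝ, 0 < t → κ (l*t) ≤ κ t := by
    intro l hl t ht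
    have := sPhi_bound hκ (c := 1 * l ^ (0:ℝ)) (by rw [Real.rpow_zero]; norm_num)
      (H2 l hl) ht
    rwa [Real.rpow_zero, one_mul, one_mul] at this
  -- base bound on (0,1]
  have Hbase : ∀ s : ℝ, 0 < s → s ≤ 1 → ∀ t : ℝ, 0 < t → κ (s*t) ≤ b/(2*s) * κ t := by
    intro s hs hs1 t ht
    have hsb : s * b⁻¹ < δ₁ := by
      calc s * b⁻¹ ≤ 1 * b⁻¹ := by gcongr
        _ < δ₁ := by rw [one_mul]; linarith
    have h1 : κ (s * b⁻¹ * (b * t)) ≤ 1/(2*(s*b⁻¹)) * κ (b * t) :=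
      Hsm (s*b⁻¹) (by positivity) hsb (b*t) (by positivity)
    have h2 : κ (b * t) ≤ κ t := Hlg b hbM t ht
    have heq : s * b⁻¹ * (b * t) = s * t := by field_simp
    rw [heq] at h1
    have hc : 1/(2*(s*b⁻¹)) = b/(2*s) := by field_simp
    rw [hc] at h1
    calc κ (s*t) ≤ b/(2*s) * κ (b*t) := h1
      _ ≤ b/(2*s) * κ t := mul_le_mul_of_nonneg_left h2 (by positivity)
  -- base bound on [1,∞)
  have Hbig : ∀ s : ℝ, 1 ≤ s → ∀ t : ℝ, 0 < t → κ (s*t) ≤ b * κ t := by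
    intro s hs t ht
    have h1 : κ (s * b * (b⁻¹ * t)) ≤ κ (b⁻¹ * t) := by
      apply Hlg (s*b) _ (b⁻¹*t) (by positivity)
      calc M₀ < b := hbM
        _ = 1 * b := (one_mul b).symm
        _ ≤ s * b := by gcongr
    have h2 : κ (b⁻¹ * t) ≤ 1/(2*b⁻¹) * κ t := Hsm b⁻¹ hbi0 (by linarith) t ht
    have heq : s * b * (b⁻¹ * t) = s * t := by field_simp
    rw [heq] at h1
    have hc : 1/(2*b⁻¹) = b/2 := by field_simp
    calc κ (s*t) ≤ κ (b⁻¹ * t) := h1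
      _ ≤ b/2 * κ t := by rw [← hc]; exact h2
      _ ≤ b * κ t := by have := (hκ t ht).le; nlinarith
  -- iterated bound
  have Han : ∀ n : ℕ, ∀ t : ℝ, 0 < t → κ (a^n * t) ≤ (1/(2*a))^n * κ t := by
    intro n
    induction n with
    | zero => intro t ht; simp
    | succ n ih =>
      intro t ht
      have h1 : κ (a * (a^n * t)) ≤ 1/(2*a) * κ (a^n * t) :=
        Hsm a ha0 haδ (a^n * t) (by positivity)
      rw [show a * (a^n * t) = a^(n+1) * t by ring] at h1
      calc κ (a^(n+1) * t) ≤ 1/(2*a) * κ (a^n * t) := h1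
        _ ≤ 1/(2*a) * ((1/(2*a))^n * κ t) :=
            mul_le_mul_of_nonneg_left (ih t ht) (by positivity)
        _ = (1/(2*a))^(n+1) * κ t := by ring
  -- exponent
  set ρ : ℝ := Real.log 2 / Real.log a⁻¹ with hρ_def
  have hloga : 0 < Real.log a⁻¹ := Real.log_pos (by linarith)
  have hρ0 : 0 < ρ := div_pos (Real.log_pos one_lt_two) hloga
  have hρ1 : ρ ≤ 1 := by
    rw [hρ_def, div_le_one hloga]
    exact Real.log_le_log (by norm_num) (by linarith)
  have haρ : a ^ ρ = 1/2 := by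
    rw [Real.rpow_def_of_pos ha0]
    have hlog : Real.log a = -Real.log a⁻¹ := by rw [Real.log_inv, neg_neg]
    rw [hlog, show -Real.log a⁻¹ * ρ = -(Real.log a⁻¹ * ρ) by ring]
    have : Real.log a⁻¹ * ρ = Real.log 2 := by
      rw [hρ_def, mul_comm]; exact div_mul_cancel₀ _ hloga.ne'
    rw [this, Real.exp_neg, Real.exp_log two_pos]
    norm_num
  refine ⟨b, hb1.le, ρ, hρ0, hρ1, ?_, fun s hs t ht => Hbig s hs t ht⟩
  intro s hs hs1 t ht
  obtain ⟨n, hn1, hn2⟩ : ∃ n : ℕ, a^(n+1) < s ∧ s ≤ a^n := by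
    have hex : ∃ m : ℕ, a ^ m < s := exists_pow_lt_of_lt_one hs ha1
    classical
    have hm : a ^ (Nat.find hex) < s := Nat.find_spec hex
    have hm0 : Nat.find hex ≠ 0 := by
      intro h0
      rw [h0, pow_zero] at hm; linarith
    refine ⟨Nat.find hex - 1, ?_, ?_⟩
    · rwa [Nat.sub_add_cancel (Nat.one_le_iff_ne_zero.mpr hm0)]
    · exact not_lt.mp (Nat.find_min hex (Nat.sub_lt (Nat.pos_of_ne_zero hm0) one_pos))
  have hapow : (0:ℝ) < a^n := by positivity
  set u : ℝ := s / a^n with hu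
  have hu0 : 0 < u := by positivity
  have hu1 : u ≤ 1 := by rw [hu, div_le_one hapow]; exact hn2
  have h1 : κ (u * (a^n * t)) ≤ b/(2*u) * κ (a^n*t) := Hbase u hu0 hu1 _ (by positivity)
  have h2 : κ (a^n * t) ≤ (1/(2*a))^n * κ t := Han n t ht
  have key : κ (s*t) ≤ b/(2*u) * (1/(2*a))^n * κ t := by
    rw [show s*t = u * (a^n * t) by rw [hu]; field_simp]
    calc κ (u * (a^n*t)) ≤ b/(2*u) * κ (a^n*t) := h1
      _ ≤ b/(2*u) * ((1/(2*a))^n * κ t) := mul_le_mul_of_nonneg_left h2 (by positivity)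
      _ = b/(2*u) * (1/(2*a))^n * κ t := by ring
  have hconst : b/(2*u) * (1/(2*a))^n ≤ b * s^(ρ-1) := by
    have e1 : b/(2*u) * (1/(2*a))^n = b * (1/2)^(n+1) / s := by
      rw [hu]
      field_simp
      ring
      rw [← mul_pow, mul_inv_cancel₀ ha0.ne', one_pow, one_mul]
    have e2 : ((1:ℝ)/2)^(n+1) ≤ s^ρ := by
      have heq2 : ((1:ℝ)/2)^(n+1) = (a^(n+1) : ℝ)^ρ := by
        rw [← haρ, ← Real.rpow_natCast (a ^ ρ) (n+1), ← Real.rpow_natCast a (n+1),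
          ← Real.rpow_mul ha0.le, ← Real.rpow_mul ha0.le, mul_comm]
      rw [heq2]
      exact Real.rpow_le_rpow (by positivity) hn1.le hρ0.le
    have e3 : s^(ρ-1) = s^ρ / s := by
      rw [Real.rpow_sub hs, Real.rpow_one]
    rw [e1, e3, mul_div_assoc]
    gcongr
  calc κ (s*t) ≤ b/(2*u) * (1/(2*a))^n * κ t := key
    _ ≤ b * s^(ρ-1) * κ t := mul_le_mul_of_nonneg_right hconst (hκ t ht).le

/-- if `κ ∈ I_o(−1,0)` then its Laplace transform is finite on `(0,∞)` and
`L[κ](λ) ≃ κ(λ⁻¹)/λ` with uniform constants. -/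
theorem laplace_equiv_of_memIo (κ : ℝ → ℝ) (hκ : ∀ t ∈ Set.Ioi (0:ℝ), 0 < κ t)
    (h : memIo κ (-1) 0) :
    ∃ C > (0:ℝ), ∀ l > (0:ℝ),
      (∫⁻ t in Set.Ioi (0:ℝ), ENNReal.ofReal (Real.exp (-(l * t)) * κ t)) ≠ ⊤ ∧
      ENNReal.ofReal (C⁻¹ * (κ l⁻¹ / l)) ≤
        (∫⁻ t in Set.Ioi (0:ℝ), ENNReal.ofReal (Real.exp (-(l * t)) * κ t)) ∧
      (∫⁻ t in Set.Ioi (0:ℝ), ENNReal.ofReal (Real.exp (-(l * t)) * κ t)) ≤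
        ENNReal.ofReal (C * (κ l⁻¹ / l)) := by
  obtain ⟨b, hb1, ρ, hρ0, hρ1, Hsmall, Hbig⟩ := exists_bounds hκ h
  have hb0 : (0:ℝ) < b := by linarith
  refine ⟨2*b*Real.exp 2 + b/ρ + b, by positivity, ?_⟩
  intro l hl
  set T : ℝ := l⁻¹ with hTdef
  have hT0 : 0 < T := inv_pos.mpr hl
  have hκT : 0 < κ T := hκ T hT0
  have hlT : l * T = 1 := mul_inv_cancel₀ hl.ne'
  -- splitting
  have split : (∫⁻ t in Set.Ioi (0:ℝ), ENNReal.ofReal (Real.exp (-(l * t)) * κ t)) =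
      (∫⁻ t in Set.Ioc (0:ℝ) T, ENNReal.ofReal (Real.exp (-(l * t)) * κ t)) +
      (∫⁻ t in Set.Ioi T, ENNReal.ofReal (Real.exp (-(l * t)) * κ t)) := by
    rw [← Ioc_union_Ioi_eq_Ioi hT0.le,
      lintegral_union measurableSet_Ioi Ioc_disjoint_Ioi_same]
  -- upper bound on (0, T]
  have up1 : (∫⁻ t in Set.Ioc (0:ℝ) T, ENNReal.ofReal (Real.exp (-(l * t)) * κ t))
      ≤ ENNReal.ofReal ((b/ρ) * (κ T / l)) := by
    have step : ∀ t ∈ Set.Ioc (0:ℝ) T, ENNReal.ofReal (Real.exp (-(l * t)) * κ t) ≤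
        ENNReal.ofReal (b * l^(ρ-1) * κ T) * ENNReal.ofReal (t^(ρ-1)) := by
      intro t ht
      rw [← ENNReal.ofReal_mul (by positivity)]
      apply ENNReal.ofReal_le_ofReal
      have h1 : Real.exp (-(l*t)) ≤ 1 := by
        rw [Real.exp_le_one_iff]
        have : 0 < l * t := mul_pos hl ht.1
        linarith
      have h2 : κ t ≤ b * (l*t)^(ρ-1) * κ T := by
        have hlt1 : l * t ≤ 1 := by
          calc l * t ≤ l * T := by gcongr; exact ht.2
            _ = 1 := hlT
        have := Hsmall (l*t) (mul_pos hl ht.1) hlt1 T hT0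
        rwa [show (l*t) * T = t by rw [hTdef]; field_simp] at this
      have hexp : 0 ≤ Real.exp (-(l*t)) := (Real.exp_pos _).le
      have hκt : 0 ≤ κ t := (hκ t ht.1).le
      calc Real.exp (-(l*t)) * κ t ≤ 1 * (b * (l*t)^(ρ-1) * κ T) :=
          mul_le_mul h1 h2 hκt zero_le_one
        _ = b * (l*t)^(ρ-1) * κ T := one_mul _
        _ = b * l^(ρ-1) * κ T * t^(ρ-1) := by
            rw [Real.mul_rpow hl.le ht.1.le]; ring
    calc (∫⁻ t in Set.Ioc (0:ℝ) T, ENNReal.ofReal (Real.exp (-(l * t)) * κ t))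
        ≤ ∫⁻ t in Set.Ioc (0:ℝ) T,
            ENNReal.ofReal (b * l^(ρ-1) * κ T) * ENNReal.ofReal (t^(ρ-1)) :=
          setLIntegral_mono' measurableSet_Ioc step
      _ = ENNReal.ofReal (b * l^(ρ-1) * κ T) *
            ∫⁻ t in Set.Ioc (0:ℝ) T, ENNReal.ofReal (t^(ρ-1)) :=
          lintegral_const_mul' _ _ ofReal_ne_top
      _ = ENNReal.ofReal (b * l^(ρ-1) * κ T) * ENNReal.ofReal (T^ρ/ρ) := by
          rw [my_lintegral_rpow_Ioc hT0 hρ0]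
      _ = ENNReal.ofReal (b * l^(ρ-1) * κ T * (T^ρ/ρ)) := by
          rw [← ENNReal.ofReal_mul (by positivity)]
      _ = ENNReal.ofReal ((b/ρ) * (κ T / l)) := by
          congr 1
          have hTρ : T ^ ρ = l ^ (-ρ) := by
            rw [hTdef, ← Real.rpow_neg_one l, ← Real.rpow_mul hl.le]
            norm_num
          have hmul : l ^ (ρ-1) * l ^ (-ρ) = l⁻¹ := by
            rw [← Real.rpow_add hl, show ρ - 1 + -ρ = -1 by ring, Real.rpow_neg_one]
          rw [hTρ]
          calc b * l^(ρ-1) * κ T * (l^(-ρ)/ρ) = b/ρ * κ T * (l^(ρ-1) * l^(-ρ)) := by ring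
            _ = b/ρ * κ T * l⁻¹ := by rw [hmul]
            _ = b/ρ * (κ T / l) := by ring
  -- upper bound on (T, ∞)
  have up2 : (∫⁻ t in Set.Ioi T, ENNReal.ofReal (Real.exp (-(l * t)) * κ t))
      ≤ ENNReal.ofReal (b * (κ T / l)) := by
    have step : ∀ t ∈ Set.Ioi T, ENNReal.ofReal (Real.exp (-(l * t)) * κ t) ≤
        ENNReal.ofReal (b * κ T) * ENNReal.ofReal (Real.exp (-(l * t))) := by
      intro t ht
      rw [← ENNReal.ofReal_mul (by positivity)]
      apply ENNReal.ofReal_le_ofReal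
      have ht0 : 0 < t := lt_trans hT0 ht
      have h2 : κ t ≤ b * κ T := by
        have hlt1 : 1 ≤ l * t := by
          rw [← hlT]; gcongr; exact (le_of_lt ht)
        have := Hbig (l*t) hlt1 T hT0
        rwa [show (l*t) * T = t by rw [hTdef]; field_simp] at this
      calc Real.exp (-(l*t)) * κ t ≤ Real.exp (-(l*t)) * (b * κ T) :=
          mul_le_mul_of_nonneg_left h2 (Real.exp_pos _).le
        _ = b * κ T * Real.exp (-(l*t)) := by ring
    calc (∫⁻ t in Set.Ioi T, ENNReal.ofReal (Real.exp (-(l * t)) * κ t))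
        ≤ ∫⁻ t in Set.Ioi T, ENNReal.ofReal (b * κ T) * ENNReal.ofReal (Real.exp (-(l*t))) :=
          setLIntegral_mono' measurableSet_Ioi step
      _ = ENNReal.ofReal (b * κ T) * ∫⁻ t in Set.Ioi T, ENNReal.ofReal (Real.exp (-(l*t))) :=
          lintegral_const_mul' _ _ ofReal_ne_top
      _ ≤ ENNReal.ofReal (b * κ T) * ENNReal.ofReal (1/l) := by
          gcongr
          exact my_lintegral_exp_Ioi hl hT0.le
      _ = ENNReal.ofReal (b * (κ T / l)) := by
          rw [← ENNReal.ofReal_mul (by positivity)]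
          congr 1
          ring
  have hup : (∫⁻ t in Set.Ioi (0:ℝ), ENNReal.ofReal (Real.exp (-(l * t)) * κ t))
      ≤ ENNReal.ofReal ((b/ρ + b) * (κ T / l)) := by
    rw [split]
    calc (∫⁻ t in Set.Ioc (0:ℝ) T, ENNReal.ofReal (Real.exp (-(l * t)) * κ t)) +
          (∫⁻ t in Set.Ioi T, ENNReal.ofReal (Real.exp (-(l * t)) * κ t))
        ≤ ENNReal.ofReal ((b/ρ) * (κ T / l)) + ENNReal.ofReal (b * (κ T / l)) :=
          add_le_add up1 up2
      _ = ENNReal.ofReal ((b/ρ + b) * (κ T / l)) := by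
          rw [← ENNReal.ofReal_add (by positivity) (by positivity)]
          congr 1
          ring
  -- lower bound
  have low : ENNReal.ofReal ((Real.exp 2)⁻¹ * (κ T/(2*b)) * T)
      ≤ (∫⁻ t in Set.Ioi (0:ℝ), ENNReal.ofReal (Real.exp (-(l * t)) * κ t)) := by
    have step : ∀ t ∈ Set.Ioc T (2*T), ENNReal.ofReal ((Real.exp 2)⁻¹ * (κ T/(2*b))) ≤
        ENNReal.ofReal (Real.exp (-(l * t)) * κ t) := by
      intro t ht
      apply ENNReal.ofReal_le_ofReal
      have ht0 : 0 < t := lt_trans hT0 ht.1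
      have hlt1 : 1 < l * t := by
        rw [← hlT]; gcongr; exact ht.1
      have hlt2 : l * t ≤ 2 := by
        calc l * t ≤ l * (2*T) := by gcongr; exact ht.2
          _ = 2 * (l * T) := by ring
          _ = 2 := by rw [hlT]; norm_num
      have hexp : (Real.exp 2)⁻¹ ≤ Real.exp (-(l*t)) := by
        rw [← Real.exp_neg]
        apply Real.exp_le_exp.mpr
        linarith
      have hκt : κ T / (2*b) ≤ κ t := by
        set u : ℝ := (l*t)⁻¹ with hu
        have hu0 : 0 < u := by rw [hu]; positivity
        have hu1 : u ≤ 1 := by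
          rw [hu, inv_le_one_iff₀]; right; linarith
        have hu2 : (2:ℝ)⁻¹ ≤ u := by
          rw [hu]
          apply inv_anti₀ (by linarith) hlt2
        have hk := Hsmall u hu0 hu1 t ht0
        have huT : u * t = T := by
          rw [hu, hTdef]
          field_simp
        rw [huT] at hk
        have hur : u ^ (ρ-1) ≤ 2 := by
          have e3 : u^(ρ-1) = u^ρ * u⁻¹ := by
            rw [Real.rpow_sub hu0, Real.rpow_one, div_eq_mul_inv]
          have h4 : u^ρ ≤ 1 := Real.rpow_le_one hu0.le hu1 hρ0.le
          have h5 : u⁻¹ ≤ 2 := by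
            rw [inv_le_comm₀ hu0 (by norm_num)]
            exact hu2
          calc u^(ρ-1) = u^ρ * u⁻¹ := e3
            _ ≤ 1 * 2 := mul_le_mul h4 h5 (by positivity) zero_le_one
            _ = 2 := by norm_num
        have : κ T ≤ 2 * b * κ t := by
          calc κ T ≤ b * u^(ρ-1) * κ t := hk
            _ ≤ b * 2 * κ t := by
                have h7 := (hκ t ht0).le
                nlinarith [mul_nonneg (mul_nonneg hb0.le (sub_nonneg.mpr hur)) h7]
            _ = 2 * b * κ t := by ring
        rw [div_le_iff₀ (by positivity)]
        linarith [this]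
      have h1 : 0 ≤ (Real.exp 2)⁻¹ := by positivity
      have h2 : 0 ≤ κ T / (2*b) := by positivity
      exact mul_le_mul hexp hκt h2 (Real.exp_pos _).le
    calc ENNReal.ofReal ((Real.exp 2)⁻¹ * (κ T/(2*b)) * T)
        = ENNReal.ofReal ((Real.exp 2)⁻¹ * (κ T/(2*b))) * ENNReal.ofReal (2*T - T) := by
          rw [← ENNReal.ofReal_mul (by positivity)]
          congr 1
          ring
      _ = ∫⁻ _ in Set.Ioc T (2*T), ENNReal.ofReal ((Real.exp 2)⁻¹ * (κ T/(2*b))) := by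
          rw [setLIntegral_const, Real.volume_Ioc]
      _ ≤ ∫⁻ t in Set.Ioc T (2*T), ENNReal.ofReal (Real.exp (-(l * t)) * κ t) :=
          setLIntegral_mono' measurableSet_Ioc step
      _ ≤ ∫⁻ t in Set.Ioi (0:ℝ), ENNReal.ofReal (Real.exp (-(l * t)) * κ t) :=
          lintegral_mono_set (fun x hx => lt_trans hT0 hx.1)
  -- conclusion
  set C : ℝ := 2*b*Real.exp 2 + b/ρ + b with hC
  have hC0 : 0 < C := by positivity
  refine ⟨?_, ?_, ?_⟩
  · exact ne_top_of_le_ne_top ofReal_ne_top hup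
  · refine le_trans ?_ low
    apply ENNReal.ofReal_le_ofReal
    have hCinv : C⁻¹ ≤ (Real.exp 2)⁻¹ * (2*b)⁻¹ := by
      rw [← mul_inv]
      apply inv_anti₀ (by positivity)
      rw [hC]
      have h6 : 0 ≤ b/ρ := by positivity
      nlinarith [Real.exp_pos 2]
    calc C⁻¹ * (κ T / l) ≤ ((Real.exp 2)⁻¹ * (2*b)⁻¹) * (κ T / l) := by
          apply mul_le_mul_of_nonneg_right hCinv (by positivity)
      _ = (Real.exp 2)⁻¹ * (κ T/(2*b)) * T := by
          rw [hTdef]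
          ring
  · refine le_trans hup ?_
    apply ENNReal.ofReal_le_ofReal
    apply mul_le_mul_of_nonneg_right _ (by positivity)
    rw [hC]
    nlinarith [Real.exp_pos 2]
end

section
/- Let μ be a nonnegative measure on (0,∞) with ∫_0^∞ min(1,t) μ(dt) < ∞, κ(x) = μ((x,∞)), and φ(λ) = ∫_0^∞ (1 − e^{−λt}) μ(dt). Then κ ∈ I_o(−1,0) if and only if φ ∈ I_o(0,1), and in that case φ(λ) ≃ κ(λ^{−1}) for all λ > 0. -/
open Real MeasureTheory Set Filter ENNReal

lemma aux_one_sub_exp_le {u : ℝ} (hu : 0 ≤ u) : 1 - Real.exp (-u) ≤ min u 1 := by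
  have h1 : 1 - u ≤ Real.exp (-u) := by
    have := Real.add_one_le_exp (-u); linarith
  have h2 : 0 ≤ Real.exp (-u) := (Real.exp_pos _).le
  rcases le_total u 1 with h | h
  · rw [min_eq_left h]; linarith
  · rw [min_eq_right h]; linarith

lemma aux_le_one_sub_exp {u : ℝ} (hu : 0 ≤ u) :
    (Real.exp 1)⁻¹ * min u 1 ≤ 1 - Real.exp (-u) := by
  have he : (Real.exp 1)⁻¹ = Real.exp (-1) := by rw [Real.exp_neg]
  rcases le_total u 1 with h | h
  · rw [min_eq_left h]
    -- 1 - e^{-u} ≥ u e^{-u} ≥ u e^{-1}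
    have h1 : u + 1 ≤ Real.exp u := Real.add_one_le_exp u
    have h2 : Real.exp (-u) * (u + 1) ≤ 1 := by
      have := mul_le_mul_of_nonneg_left h1 (Real.exp_pos (-u)).le
      rwa [← Real.exp_add, neg_add_cancel, Real.exp_zero] at this
    have h3 : Real.exp (-1) ≤ Real.exp (-u) := Real.exp_le_exp.2 (by linarith)
    rw [he]
    nlinarith [Real.exp_pos (-u), Real.exp_pos (-1)]
  · rw [min_eq_right h]
    have h3 : Real.exp (-u) ≤ Real.exp (-1) := Real.exp_le_exp.2 (by linarith)
    have h4 : Real.exp (-1) * Real.exp 1 = 1 := by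
      rw [← Real.exp_add]; simp
    have h5 : (2.7182818283 : ℝ) < Real.exp 1 := Real.exp_one_gt_d9
    rw [he]
    nlinarith [Real.exp_pos (-1)]

lemma sPhi_ge (φ : ℝ → ℝ) (l t : ℝ) (ht : (0:ℝ) < t) :
    ENNReal.ofReal (φ (l * t) / φ t) ≤ sPhi φ l := by
  exact le_iSup₂ (f := fun t (_ : t ∈ Set.Ioi (0:ℝ)) => ENNReal.ofReal (φ (l * t) / φ t)) t ht

lemma sPhi_transfer {f g : ℝ → ℝ} {c C : ℝ} (hc : 0 < c)
    (hfl : ∀ x, 0 < x → c * g x⁻¹ ≤ f x) (hfu : ∀ x, 0 < x → f x ≤ C * g x⁻¹)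
    (hgpos : ∀ x, 0 < x → 0 < g x) :
    ∀ l, 0 < l → sPhi f l ≤ ENNReal.ofReal (C / c) * sPhi g l⁻¹ := by
  intro l hl
  refine iSup₂_le fun t ht => ?_
  have ht' : (0:ℝ) < t := ht
  have hglt : 0 < g t⁻¹ := hgpos _ (inv_pos.2 ht')
  have hft : 0 < f t := lt_of_lt_of_le (by positivity) (hfl t ht')
  have hC : 0 ≤ C := by
    by_contra hCn
    push_neg at hCn
    have := hfu t ht'
    nlinarith
  have h1 : f (l * t) / f t ≤ (C / c) * (g (l⁻¹ * t⁻¹) / g t⁻¹) := by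
    have hu : f (l * t) ≤ C * g (l⁻¹ * t⁻¹) := by
      have := hfu (l * t) (by positivity)
      rwa [mul_inv] at this
    have hlo : c * g t⁻¹ ≤ f t := hfl t ht'
    have hglt' : 0 < g (l⁻¹ * t⁻¹) := hgpos _ (by positivity)
    rw [div_le_iff₀ hft]
    calc f (l * t) ≤ C * g (l⁻¹ * t⁻¹) := hu
      _ = (C / c) * (g (l⁻¹ * t⁻¹) / g t⁻¹) * (c * g t⁻¹) := by
          have hg1t : (0:ℝ) < g (1/t) := hgpos _ (by positivity)
          field_simp
      _ ≤ (C / c) * (g (l⁻¹ * t⁻¹) / g t⁻¹) * f t := by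
          apply mul_le_mul_of_nonneg_left hlo
          exact mul_nonneg (div_nonneg hC hc.le) (div_nonneg hglt'.le hglt.le)
  calc ENNReal.ofReal (f (l * t) / f t)
      ≤ ENNReal.ofReal ((C / c) * (g (l⁻¹ * t⁻¹) / g t⁻¹)) := ENNReal.ofReal_le_ofReal h1
    _ = ENNReal.ofReal (C / c) * ENNReal.ofReal (g (l⁻¹ * t⁻¹) / g t⁻¹) := by
        rw [ENNReal.ofReal_mul (div_nonneg hC hc.le)]
    _ ≤ ENNReal.ofReal (C / c) * sPhi g l⁻¹ := by
        exact mul_le_mul_right (sPhi_ge g l⁻¹ t⁻¹ (inv_pos.2 ht')) _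

lemma memIo_transfer {f g : ℝ → ℝ} {a b D : ℝ} (hD : 0 < D)
    (h : ∀ l, 0 < l → sPhi f l ≤ ENNReal.ofReal D * sPhi g l⁻¹)
    (hg : memIo g a b) : memIo f (-b) (-a) := by
  constructor
  · intro ε hε
    obtain ⟨M, hM⟩ := hg.2 (ε / D) (by positivity)
    refine ⟨(|M| + 1)⁻¹, by positivity, fun l hl hlδ => ?_⟩
    have habs : (0:ℝ) < |M| + 1 := by positivity
    have hlM : M < l⁻¹ := by
      have h2 : l * l⁻¹ = 1 := mul_inv_cancel₀ (ne_of_gt hl)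
      have h5 : M ≤ |M| := le_abs_self M
      have h6 : (|M|+1) * l < 1 := by
        have := mul_lt_mul_of_pos_left hlδ habs
        rwa [mul_inv_cancel₀ (ne_of_gt habs)] at this
      nlinarith [inv_pos.2 hl]
    calc sPhi f l ≤ ENNReal.ofReal D * sPhi g l⁻¹ := h l hl
      _ ≤ ENNReal.ofReal D * ENNReal.ofReal (ε / D * (l⁻¹) ^ b) :=
          mul_le_mul_right (hM _ hlM) _
      _ = ENNReal.ofReal (ε * l ^ (-b)) := by
          rw [← ENNReal.ofReal_mul hD.le, Real.rpow_neg hl.le, ← Real.inv_rpow hl.le]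
          congr 1
          field_simp
  · intro ε hε
    obtain ⟨δ, hδ, hsm⟩ := hg.1 (ε / D) (by positivity)
    refine ⟨δ⁻¹, fun l hl => ?_⟩
    have hl0 : 0 < l := lt_trans (by positivity) hl
    have hinv : l⁻¹ < δ := by
      have h2 : l * l⁻¹ = 1 := mul_inv_cancel₀ (ne_of_gt hl0)
      have h6 : δ⁻¹ * δ = 1 := inv_mul_cancel₀ (ne_of_gt hδ)
      nlinarith [inv_pos.2 hl0]
    calc sPhi f l ≤ ENNReal.ofReal D * sPhi g l⁻¹ := h l hl0
      _ ≤ ENNReal.ofReal D * ENNReal.ofReal (ε / D * (l⁻¹) ^ a) :=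
          mul_le_mul_right (hsm _ (inv_pos.2 hl0) hinv) _
      _ = ENNReal.ofReal (ε * l ^ (-a)) := by
          rw [← ENNReal.ofReal_mul hD.le, Real.rpow_neg hl0.le, ← Real.inv_rpow hl0.le]
          congr 1
          field_simp


/-- for a nonnegative measure `μ` on `(0,∞)` with `∫ min(1,t) μ(dt) < ∞`,
setting `κ(x) = μ((x,∞))` and `φ(λ) = ∫ (1 − e^{−λt}) μ(dt)`, one has
`κ ∈ I_o(−1,0) ↔ φ ∈ I_o(0,1)`, and in that case `φ(λ) ≃ κ(λ⁻¹)` for all `λ > 0`. -/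
theorem memIo_kernel_iff_bernstein (μ : Measure ℝ) (hμ0 : μ (Set.Iic 0) = 0)
    (hμ : (∫⁻ t in Set.Ioi (0:ℝ), ENNReal.ofReal (min 1 t) ∂μ) ≠ ⊤)
    (κ φ : ℝ → ℝ)
    (hκ : ∀ x, κ x = (μ (Set.Ioi x)).toReal)
    (hφ : ∀ l, φ l =
      (∫⁻ t in Set.Ioi (0:ℝ), ENNReal.ofReal (1 - Real.exp (-(l * t))) ∂μ).toReal)
    (hκpos : ∀ x ∈ Set.Ioi (0:ℝ), 0 < κ x) :
    (memIo κ (-1) 0 ↔ memIo φ 0 1) ∧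
    (memIo κ (-1) 0 →
      ∃ C > (0:ℝ), ∀ l > (0:ℝ), C⁻¹ * κ l⁻¹ ≤ φ l ∧ φ l ≤ C * κ l⁻¹) := by
  have hmeas_min : ∀ x : ℝ, Measurable fun t : ℝ => ENNReal.ofReal (min t x) :=
    fun x => (measurable_id.min measurable_const).ennreal_ofReal
  set Gm : ℝ → ℝ≥0∞ := fun x => ∫⁻ t in Ioi (0:ℝ), ENNReal.ofReal (min t x) ∂μ with hGmdef
  -- finiteness of Gm
  have hGm_ne : ∀ x : ℝ, 0 < x → Gm x ≠ ⊤ := by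
    intro x hx
    have hb : ∀ t ∈ Ioi (0:ℝ), ENNReal.ofReal (min t x)
        ≤ ENNReal.ofReal (max x 1) * ENNReal.ofReal (min 1 t) := by
      intro t ht
      rw [← ENNReal.ofReal_mul (le_trans zero_le_one (le_max_right x 1))]
      apply ENNReal.ofReal_le_ofReal
      rcases le_total t 1 with h | h
      · rw [min_eq_right h]
        calc min t x ≤ t := min_le_left _ _
          _ ≤ max x 1 * t := le_mul_of_one_le_left (le_of_lt ht) (le_max_right x 1)
      · rw [min_eq_left h]
        calc min t x ≤ x := min_le_right _ _
          _ ≤ max x 1 := le_max_left x 1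
          _ = max x 1 * 1 := (mul_one _).symm
    have hle : Gm x ≤ ENNReal.ofReal (max x 1) * ∫⁻ t in Ioi (0:ℝ),
        ENNReal.ofReal (min 1 t) ∂μ := by
      calc Gm x ≤ ∫⁻ t in Ioi (0:ℝ),
          ENNReal.ofReal (max x 1) * ENNReal.ofReal (min 1 t) ∂μ :=
            setLIntegral_mono (measurable_const.mul
              (measurable_const.min measurable_id).ennreal_ofReal) hb
        _ = _ := lintegral_const_mul _ (measurable_const.min measurable_id).ennreal_ofReal
    exact ne_top_of_le_ne_top (ENNReal.mul_ne_top ENNReal.ofReal_ne_top hμ) hle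
  -- finiteness of μ (Ioi x)
  have hμIoi_ne : ∀ x : ℝ, 0 < x → μ (Set.Ioi x) ≠ ⊤ := by
    intro x hx
    have h1 : ENNReal.ofReal (min 1 x) * μ (Set.Ioi x)
        ≤ ∫⁻ t in Set.Ioi (0:ℝ), ENNReal.ofReal (min 1 t) ∂μ := by
      calc ENNReal.ofReal (min 1 x) * μ (Set.Ioi x)
          = ∫⁻ _ in Set.Ioi x, ENNReal.ofReal (min 1 x) ∂μ := by
            rw [setLIntegral_const]
        _ ≤ ∫⁻ t in Set.Ioi x, ENNReal.ofReal (min 1 t) ∂μ := by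
            apply setLIntegral_mono (measurable_const.min measurable_id).ennreal_ofReal
            intro t ht
            exact ENNReal.ofReal_le_ofReal (min_le_min le_rfl (le_of_lt ht))
        _ ≤ _ := lintegral_mono_set (fun t ht => lt_trans hx ht)
    intro htop
    rw [htop, ENNReal.mul_top (by
      simp only [ne_eq, ENNReal.ofReal_eq_zero, not_le]
      exact lt_min one_pos hx)] at h1
    exact hμ (top_le_iff.mp h1)
  have hκ_ofReal : ∀ x : ℝ, 0 < x → ENNReal.ofReal (κ x) = μ (Set.Ioi x) := by
    intro x hx
    rw [hκ x, ENNReal.ofReal_toReal (hμIoi_ne x hx)]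
  -- lower bound : x * κ x ≤ G x
  have hG_lower : ∀ x : ℝ, 0 < x → ENNReal.ofReal x * μ (Set.Ioi x) ≤ Gm x := by
    intro x hx
    calc ENNReal.ofReal x * μ (Set.Ioi x)
        = ∫⁻ _ in Set.Ioi x, ENNReal.ofReal x ∂μ := by rw [setLIntegral_const]
      _ = ∫⁻ t in Set.Ioi x, ENNReal.ofReal (min t x) ∂μ := by
          apply setLIntegral_congr_fun measurableSet_Ioi
          intro t ht; beta_reduce
          rw [min_eq_right (le_of_lt ht)]
      _ ≤ Gm x := lintegral_mono_set (fun t ht => lt_trans hx ht)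

  -- measurability of the exp integrand
  have hexp_meas : ∀ l : ℝ, Measurable fun t : ℝ => ENNReal.ofReal (1 - Real.exp (-(l*t))) :=
    fun l => (measurable_const.sub ((measurable_const.mul measurable_id).neg.exp)).ennreal_ofReal
  -- upper bound for Φ
  have hΦ_le : ∀ l : ℝ, 0 < l →
      (∫⁻ t in Set.Ioi (0:ℝ), ENNReal.ofReal (1 - Real.exp (-(l * t))) ∂μ)
        ≤ ENNReal.ofReal l * Gm l⁻¹ := by
    intro l hl
    calc (∫⁻ t in Set.Ioi (0:ℝ), ENNReal.ofReal (1 - Real.exp (-(l * t))) ∂μ)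
        ≤ ∫⁻ t in Set.Ioi (0:ℝ), ENNReal.ofReal l * ENNReal.ofReal (min t l⁻¹) ∂μ := by
          apply setLIntegral_mono ((hmeas_min l⁻¹).const_mul _)
          intro t ht
          rw [← ENNReal.ofReal_mul hl.le]
          apply ENNReal.ofReal_le_ofReal
          rw [mul_min_of_nonneg _ _ hl.le, mul_inv_cancel₀ (ne_of_gt hl)]
          exact aux_one_sub_exp_le (mul_nonneg hl.le (le_of_lt ht))
      _ = ENNReal.ofReal l * Gm l⁻¹ := lintegral_const_mul _ (hmeas_min l⁻¹)
  -- lower bound for Φ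
  have hΦ_ge : ∀ l : ℝ, 0 < l →
      ENNReal.ofReal (Real.exp 1)⁻¹ * (ENNReal.ofReal l * Gm l⁻¹)
        ≤ ∫⁻ t in Set.Ioi (0:ℝ), ENNReal.ofReal (1 - Real.exp (-(l * t))) ∂μ := by
    intro l hl
    calc ENNReal.ofReal (Real.exp 1)⁻¹ * (ENNReal.ofReal l * Gm l⁻¹)
        = ∫⁻ t in Set.Ioi (0:ℝ), ENNReal.ofReal (Real.exp 1)⁻¹ *
            (ENNReal.ofReal l * ENNReal.ofReal (min t l⁻¹)) ∂μ := by
          rw [lintegral_const_mul _ ((hmeas_min l⁻¹).const_mul _),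
            lintegral_const_mul _ (hmeas_min l⁻¹)]
      _ ≤ _ := by
          apply setLIntegral_mono (hexp_meas l)
          intro t ht
          have htpos : (0:ℝ) < t := ht
          have hmin0 : (0:ℝ) ≤ min t l⁻¹ := le_min htpos.le (inv_pos.2 hl).le
          rw [← ENNReal.ofReal_mul hl.le, ← ENNReal.ofReal_mul (by positivity)]
          apply ENNReal.ofReal_le_ofReal
          rw [mul_min_of_nonneg _ _ hl.le, mul_inv_cancel₀ (ne_of_gt hl)]
          exact aux_le_one_sub_exp (mul_nonneg hl.le htpos.le)
  have hΦ_ne : ∀ l : ℝ, 0 < l →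
      (∫⁻ t in Set.Ioi (0:ℝ), ENNReal.ofReal (1 - Real.exp (-(l * t))) ∂μ) ≠ ⊤ :=
    fun l hl => ne_top_of_le_ne_top
      (ENNReal.mul_ne_top ENNReal.ofReal_ne_top (hGm_ne l⁻¹ (inv_pos.2 hl))) (hΦ_le l hl)
  set G : ℝ → ℝ := fun x => (Gm x).toReal with hGdef
  have hL1u : ∀ l : ℝ, 0 < l → φ l ≤ l * G l⁻¹ := by
    intro l hl
    rw [hφ l]
    have := ENNReal.toReal_mono
      (ENNReal.mul_ne_top ENNReal.ofReal_ne_top (hGm_ne l⁻¹ (inv_pos.2 hl))) (hΦ_le l hl)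
    rwa [ENNReal.toReal_mul, ENNReal.toReal_ofReal hl.le] at this
  have hL1l : ∀ l : ℝ, 0 < l → (Real.exp 1)⁻¹ * (l * G l⁻¹) ≤ φ l := by
    intro l hl
    rw [hφ l]
    have := ENNReal.toReal_mono (hΦ_ne l hl) (hΦ_ge l hl)
    rwa [ENNReal.toReal_mul, ENNReal.toReal_mul, ENNReal.toReal_ofReal (by positivity),
      ENNReal.toReal_ofReal hl.le] at this
  have hκ_inv_pos : ∀ l : ℝ, 0 < l → 0 < κ l⁻¹ := fun l hl => hκpos _ (inv_pos.2 hl)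
  have hG_low : ∀ x : ℝ, 0 < x → x * κ x ≤ G x := by
    intro x hx
    have := ENNReal.toReal_mono (hGm_ne x hx) (hG_lower x hx)
    rwa [ENNReal.toReal_mul, ENNReal.toReal_ofReal hx.le, ← hκ x] at this
  have hφ_pos : ∀ l : ℝ, 0 < l → 0 < φ l := by
    intro l hl
    have h1 : l⁻¹ * κ l⁻¹ ≤ G l⁻¹ := hG_low l⁻¹ (inv_pos.2 hl)
    have h2 := hL1l l hl
    have h3 : 0 < κ l⁻¹ := hκ_inv_pos l hl
    have hε : 0 < (Real.exp 1)⁻¹ := by positivity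
    have h4 : 0 < l * (l⁻¹ * κ l⁻¹) := mul_pos hl (mul_pos (inv_pos.2 hl) h3)
    nlinarith [mul_le_mul_of_nonneg_left h1 hl.le]
  -- difference bound : G x - G y ≤ (x-y) κ y
  have hGdiff : ∀ y x : ℝ, 0 < y → y ≤ x → G x ≤ G y + (x - y) * κ y := by
    intro y x hy hyx
    have hμy_ne := hμIoi_ne y hy
    have hEn : Gm x ≤ Gm y + ENNReal.ofReal (x - y) * μ (Set.Ioi y) := by
      have hpt : ∀ t ∈ Set.Ioi (0:ℝ), ENNReal.ofReal (min t x) ≤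
          ENNReal.ofReal (min t y) +
            (Set.Ioi y).indicator (fun _ => ENNReal.ofReal (x - y)) t := by
        intro t ht
        rcases le_or_gt t y with h | h
        · rw [min_eq_left h, min_eq_left (le_trans h hyx),
            Set.indicator_of_notMem (show t ∉ Set.Ioi y by simpa using h)]
          simp
        · rw [Set.indicator_of_mem (show t ∈ Set.Ioi y from h), min_eq_right h.le,
            ← ENNReal.ofReal_add hy.le (by linarith)]
          apply ENNReal.ofReal_le_ofReal
          calc min t x ≤ x := min_le_right _ _
            _ = y + (x - y) := by ring
      calc Gm x ≤ ∫⁻ t in Set.Ioi (0:ℝ), (ENNReal.ofReal (min t y) +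
            (Set.Ioi y).indicator (fun _ => ENNReal.ofReal (x-y)) t) ∂μ :=
            setLIntegral_mono ((hmeas_min y).add
              (measurable_const.indicator measurableSet_Ioi)) hpt
        _ = Gm y + ∫⁻ t in Set.Ioi (0:ℝ),
              (Set.Ioi y).indicator (fun _ => ENNReal.ofReal (x-y)) t ∂μ :=
            lintegral_add_right _ (measurable_const.indicator measurableSet_Ioi)
        _ = Gm y + ENNReal.ofReal (x - y) * μ (Set.Ioi y) := by
            rw [lintegral_indicator measurableSet_Ioi, setLIntegral_const,
              Measure.restrict_apply measurableSet_Ioi,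
              Set.Ioi_inter_Ioi, max_eq_left hy.le]
    have h2 := ENNReal.toReal_mono (ENNReal.add_ne_top.mpr ⟨hGm_ne y hy,
      ENNReal.mul_ne_top ENNReal.ofReal_ne_top hμy_ne⟩) hEn
    rwa [ENNReal.toReal_add (hGm_ne y hy)
      (ENNReal.mul_ne_top ENNReal.ofReal_ne_top hμy_ne), ENNReal.toReal_mul,
      ENNReal.toReal_ofReal (by linarith), ← hκ y] at h2
  -- Lemma A : comparability from κ ∈ I_o(-1,0)
  have hA : memIo κ (-1) 0 → ∃ C > (0:ℝ), ∀ l > (0:ℝ),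
      C⁻¹ * κ l⁻¹ ≤ φ l ∧ φ l ≤ C * κ l⁻¹ := by
    intro hk
    obtain ⟨δ₁, hδ₁, hh⟩ := hk.1 (1/2) (by norm_num)
    set δ : ℝ := min δ₁ 1 / 2 with hδdef
    have hδ0 : 0 < δ := div_pos (lt_min hδ₁ one_pos) two_pos
    have hδlt : δ < δ₁ := by
      have h := min_le_left δ₁ 1
      have h2 := lt_min hδ₁ one_pos
      rw [hδdef]; linarith
    have hδle1 : δ ≤ 1/2 := by
      have h := min_le_right δ₁ 1
      rw [hδdef]; linarith
    have hstep : ∀ x : ℝ, 0 < x → κ (δ * x) ≤ (2*δ)⁻¹ * κ x := by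
      intro x hx
      have h1 := le_trans (sPhi_ge κ δ x hx) (hh δ hδ0 hδlt)
      have h2 : κ (δ * x) / κ x ≤ 1/2 * δ ^ (-1:ℝ) := by
        rwa [ENNReal.ofReal_le_ofReal_iff
          (mul_nonneg (by norm_num) (Real.rpow_nonneg hδ0.le _))] at h1
      rw [Real.rpow_neg_one] at h2
      have hκx : 0 < κ x := hκpos x hx
      rw [div_le_iff₀ hκx] at h2
      calc κ (δ * x) ≤ 1/2 * δ⁻¹ * κ x := h2
        _ = (2*δ)⁻¹ * κ x := by rw [mul_inv]; ring
    have hiter : ∀ n : ℕ, ∀ x : ℝ, 0 < x → κ (δ^n * x) ≤ ((2*δ)⁻¹)^n * κ x := by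
      intro n
      induction n with
      | zero => intro x hx; simp
      | succ n ih =>
        intro x hx
        have hr : (0:ℝ) ≤ (2*δ)⁻¹ := (inv_pos.2 (by linarith)).le
        have h1 : δ^(n+1) * x = δ * (δ^n * x) := by ring
        rw [h1, pow_succ]
        calc κ (δ * (δ^n * x)) ≤ (2*δ)⁻¹ * κ (δ^n * x) :=
              hstep _ (mul_pos (pow_pos hδ0 n) hx)
          _ ≤ (2*δ)⁻¹ * (((2*δ)⁻¹)^n * κ x) :=
              mul_le_mul_of_nonneg_left (ih x hx) hr
          _ = ((2*δ)⁻¹)^n * (2*δ)⁻¹ * κ x := by ring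
    have hcover : ∀ x : ℝ, 0 < x →
        Set.Ioc (0:ℝ) x ⊆ ⋃ n : ℕ, Set.Ioc (δ^(n+1)*x) (δ^n*x) := by
      intro x hx t ht
      obtain ⟨ht1, ht2⟩ := ht
      have hex : ∃ n : ℕ, δ^(n+1)*x < t := by
        obtain ⟨n, hn⟩ := exists_pow_lt_of_lt_one (div_pos ht1 hx) (by linarith : δ < 1)
        refine ⟨n, ?_⟩
        have h3 : δ^(n+1) ≤ δ^n := pow_le_pow_of_le_one hδ0.le (by linarith) (by omega)
        have h4 : δ^n * x < t := by
          rw [lt_div_iff₀ hx] at hn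
          exact hn
        nlinarith [pow_pos hδ0 n, pow_pos hδ0 (n+1)]
      have h1 : δ^(Nat.find hex + 1)*x < t := Nat.find_spec hex
      have h2 : t ≤ δ^(Nat.find hex)*x := by
        rcases Nat.eq_zero_or_pos (Nat.find hex) with h0 | h0
        · rw [h0]; simpa using ht2
        · have h5 := Nat.find_min hex (m := Nat.find hex - 1) (by omega)
          push_neg at h5
          have h6 : Nat.find hex - 1 + 1 = Nat.find hex := by omega
          rwa [h6] at h5
      exact Set.mem_iUnion.2 ⟨Nat.find hex, h1, h2⟩
    have hT : ∀ x : ℝ, 0 < x →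
        (∫⁻ t in Set.Ioc (0:ℝ) x, ENNReal.ofReal t ∂μ) ≤ ENNReal.ofReal (x * κ x / δ) := by
      intro x hx
      have hκx : 0 < κ x := hκpos x hx
      have hxκδ : (0:ℝ) ≤ x * κ x / δ := div_nonneg (mul_nonneg hx.le hκx.le) hδ0.le
      have hpiece : ∀ n : ℕ, (∫⁻ t in Set.Ioc (δ^(n+1)*x) (δ^n*x), ENNReal.ofReal t ∂μ)
          ≤ ENNReal.ofReal (x * κ x / δ) * ((2:ℝ≥0∞)⁻¹)^(n+1) := by
        intro n
        have hp1 : (0:ℝ) < δ^(n+1)*x := mul_pos (pow_pos hδ0 _) hx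
        have hp0 : (0:ℝ) ≤ δ^n*x := (mul_pos (pow_pos hδ0 n) hx).le
        calc (∫⁻ t in Set.Ioc (δ^(n+1)*x) (δ^n*x), ENNReal.ofReal t ∂μ)
            ≤ ∫⁻ _ in Set.Ioc (δ^(n+1)*x) (δ^n*x), ENNReal.ofReal (δ^n*x) ∂μ :=
              setLIntegral_mono measurable_const
                (fun t ht => ENNReal.ofReal_le_ofReal ht.2)
          _ = ENNReal.ofReal (δ^n*x) * μ (Set.Ioc (δ^(n+1)*x) (δ^n*x)) :=
              setLIntegral_const _ _
          _ ≤ ENNReal.ofReal (δ^n*x) * μ (Set.Ioi (δ^(n+1)*x)) :=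
              mul_le_mul_right (measure_mono Set.Ioc_subset_Ioi_self) _
          _ = ENNReal.ofReal (δ^n*x) * ENNReal.ofReal (κ (δ^(n+1)*x)) := by
              rw [hκ_ofReal _ hp1]
          _ ≤ ENNReal.ofReal (δ^n*x) * ENNReal.ofReal (((2*δ)⁻¹)^(n+1) * κ x) :=
              mul_le_mul_right (ENNReal.ofReal_le_ofReal (hiter (n+1) x hx)) _
          _ = ENNReal.ofReal (δ^n*x * (((2*δ)⁻¹)^(n+1) * κ x)) :=
              (ENNReal.ofReal_mul hp0).symm
          _ = ENNReal.ofReal ((x * κ x / δ) * (1/2)^(n+1)) := by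
              congr 1
              have hδne : (δ:ℝ) ≠ 0 := ne_of_gt hδ0
              rw [one_div, inv_pow, inv_pow, mul_pow, mul_inv, pow_succ δ n]
              field_simp
          _ = ENNReal.ofReal (x * κ x / δ) * ((2:ℝ≥0∞)⁻¹)^(n+1) := by
              rw [ENNReal.ofReal_mul hxκδ, ENNReal.ofReal_pow (by norm_num)]
              congr 2
              rw [ENNReal.ofReal_div_of_pos two_pos, ENNReal.ofReal_one,
                ENNReal.ofReal_ofNat, one_div]
      calc (∫⁻ t in Set.Ioc (0:ℝ) x, ENNReal.ofReal t ∂μ)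
          ≤ ∫⁻ t in (⋃ n : ℕ, Set.Ioc (δ^(n+1)*x) (δ^n*x)), ENNReal.ofReal t ∂μ :=
            lintegral_mono_set (hcover x hx)
        _ ≤ ∑' n : ℕ, ∫⁻ t in Set.Ioc (δ^(n+1)*x) (δ^n*x), ENNReal.ofReal t ∂μ :=
            lintegral_iUnion_le _ _
        _ ≤ ∑' n : ℕ, ENNReal.ofReal (x * κ x / δ) * ((2:ℝ≥0∞)⁻¹)^(n+1) :=
            ENNReal.tsum_le_tsum hpiece
        _ = ENNReal.ofReal (x * κ x / δ) * ∑' n : ℕ, ((2:ℝ≥0∞)⁻¹)^(n+1) :=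
            ENNReal.tsum_mul_left
        _ = ENNReal.ofReal (x * κ x / δ) := by
            rw [ENNReal.tsum_geometric_add_one, ENNReal.one_sub_inv_two, inv_inv,
              ENNReal.inv_mul_cancel (by norm_num) (by norm_num), mul_one]
    have hGA : ∀ x : ℝ, 0 < x → G x ≤ (1 + δ⁻¹) * (x * κ x) := by
      intro x hx
      have hκx : 0 < κ x := hκpos x hx
      have hxκδ : (0:ℝ) ≤ x * κ x / δ := div_nonneg (mul_nonneg hx.le hκx.le) hδ0.le
      have hEn : Gm x ≤ ENNReal.ofReal (x * κ x / δ + x * κ x) := by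
        rw [ENNReal.ofReal_add hxκδ (mul_nonneg hx.le hκx.le)]
        calc Gm x = ∫⁻ t in (Set.Ioc (0:ℝ) x ∪ Set.Ioi x), ENNReal.ofReal (min t x) ∂μ := by
              rw [Set.Ioc_union_Ioi_eq_Ioi hx.le]
          _ ≤ (∫⁻ t in Set.Ioc (0:ℝ) x, ENNReal.ofReal (min t x) ∂μ)
              + ∫⁻ t in Set.Ioi x, ENNReal.ofReal (min t x) ∂μ := lintegral_union_le _ _ _
          _ ≤ ENNReal.ofReal (x * κ x / δ) + ENNReal.ofReal (x * κ x) := by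
              apply add_le_add
              · calc (∫⁻ t in Set.Ioc (0:ℝ) x, ENNReal.ofReal (min t x) ∂μ)
                    ≤ ∫⁻ t in Set.Ioc (0:ℝ) x, ENNReal.ofReal t ∂μ :=
                      setLIntegral_mono measurable_id.ennreal_ofReal
                        (fun t _ => ENNReal.ofReal_le_ofReal (min_le_left _ _))
                  _ ≤ _ := hT x hx
              · calc (∫⁻ t in Set.Ioi x, ENNReal.ofReal (min t x) ∂μ)
                    ≤ ∫⁻ _ in Set.Ioi x, ENNReal.ofReal x ∂μ :=
                      setLIntegral_mono measurable_const
                        (fun t _ => ENNReal.ofReal_le_ofReal (min_le_right _ _))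
                  _ = ENNReal.ofReal x * μ (Set.Ioi x) := setLIntegral_const _ _
                  _ = ENNReal.ofReal x * ENNReal.ofReal (κ x) := by rw [hκ_ofReal x hx]
                  _ = ENNReal.ofReal (x * κ x) := (ENNReal.ofReal_mul hx.le).symm
      have h2 := ENNReal.toReal_mono ENNReal.ofReal_ne_top hEn
      rw [ENNReal.toReal_ofReal (by linarith [mul_nonneg hx.le hκx.le])] at h2
      calc G x ≤ x * κ x / δ + x * κ x := h2
        _ = (1 + δ⁻¹) * (x * κ x) := by field_simp; ring
    refine ⟨max (1 + δ⁻¹) (Real.exp 1),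
      lt_of_lt_of_le (Real.exp_pos 1) (le_max_right _ _), ?_⟩
    intro l hl
    have hil : 0 < l⁻¹ := inv_pos.2 hl
    have hκl : 0 < κ l⁻¹ := hκpos _ hil
    have hGu : G l⁻¹ ≤ (1 + δ⁻¹) * (l⁻¹ * κ l⁻¹) := hGA l⁻¹ hil
    have hGl : l⁻¹ * κ l⁻¹ ≤ G l⁻¹ := hG_low l⁻¹ hil
    have hCe : Real.exp 1 ≤ max (1 + δ⁻¹) (Real.exp 1) := le_max_right _ _
    have hCd : 1 + δ⁻¹ ≤ max (1 + δ⁻¹) (Real.exp 1) := le_max_left _ _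
    have hepos := Real.exp_pos 1
    constructor
    · have h1 := hL1l l hl
      have h3 : l * (l⁻¹ * κ l⁻¹) ≤ l * G l⁻¹ := mul_le_mul_of_nonneg_left hGl hl.le
      rw [← mul_assoc, mul_inv_cancel₀ (ne_of_gt hl), one_mul] at h3
      have h4 : (Real.exp 1)⁻¹ * κ l⁻¹ ≤ φ l := by
        have h5 : (Real.exp 1)⁻¹ * κ l⁻¹ ≤ (Real.exp 1)⁻¹ * (l * G l⁻¹) :=
          mul_le_mul_of_nonneg_left h3 (inv_pos.2 hepos).le
        linarith
      calc (max (1 + δ⁻¹) (Real.exp 1))⁻¹ * κ l⁻¹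
          ≤ (Real.exp 1)⁻¹ * κ l⁻¹ := by
            apply mul_le_mul_of_nonneg_right _ hκl.le
            exact inv_anti₀ hepos hCe
        _ ≤ φ l := h4
    · have h1 := hL1u l hl
      have h2 : l * G l⁻¹ ≤ (1 + δ⁻¹) * κ l⁻¹ := by
        calc l * G l⁻¹ ≤ l * ((1 + δ⁻¹) * (l⁻¹ * κ l⁻¹)) :=
              mul_le_mul_of_nonneg_left hGu hl.le
          _ = (1 + δ⁻¹) * (l * l⁻¹) * κ l⁻¹ := by ring
          _ = (1 + δ⁻¹) * κ l⁻¹ := by rw [mul_inv_cancel₀ (ne_of_gt hl), mul_one]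
      calc φ l ≤ (1 + δ⁻¹) * κ l⁻¹ := le_trans h1 h2
        _ ≤ max (1 + δ⁻¹) (Real.exp 1) * κ l⁻¹ := mul_le_mul_of_nonneg_right hCd hκl.le
  -- Lemma B : comparability from φ ∈ I_o(0,1)
  have hB : memIo φ 0 1 → ∃ C > (0:ℝ), ∀ l > (0:ℝ),
      C⁻¹ * κ l⁻¹ ≤ φ l ∧ φ l ≤ C * κ l⁻¹ := by
    intro hp
    have hepos := Real.exp_pos 1
    set ε : ℝ := (Real.exp 1)⁻¹ / 8 with hεdef
    have hε0 : 0 < ε := by rw [hεdef]; positivity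
    obtain ⟨M, hM⟩ := hp.2 ε hε0
    set B : ℝ := |M| + 2 with hBdef
    have habs := abs_nonneg M
    have hB1 : 1 < B := by rw [hBdef]; linarith
    have hBM : M < B := lt_of_le_of_lt (le_abs_self M) (by rw [hBdef]; linarith)
    have hB0 : 0 < B := by linarith
    have hpt : ∀ x : ℝ, 0 < x → φ x⁻¹ ≤ ε * B * φ ((B*x)⁻¹) := by
      intro x hx
      have ht0 : (0:ℝ) < (B*x)⁻¹ := inv_pos.2 (mul_pos hB0 hx)
      have h1 := le_trans (sPhi_ge φ B ((B*x)⁻¹) ht0) (hM B hBM)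
      have h2 : φ (B * (B*x)⁻¹) / φ ((B*x)⁻¹) ≤ ε * B ^ (1:ℝ) := by
        rwa [ENNReal.ofReal_le_ofReal_iff
          (mul_nonneg hε0.le (Real.rpow_nonneg hB0.le _))] at h1
      rw [Real.rpow_one] at h2
      have h3 : B * (B*x)⁻¹ = x⁻¹ := by field_simp
      rw [h3, div_le_iff₀ (hφ_pos _ ht0)] at h2
      linarith
    have hG8 : ∀ x : ℝ, 0 < x → 8 * G x ≤ G (B*x) := by
      intro x hx
      have hBx : 0 < B*x := mul_pos hB0 hx
      have hxne := ne_of_gt hx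
      have hBne := ne_of_gt hB0
      have hene := ne_of_gt hepos
      have h1 : φ ((B*x)⁻¹) ≤ (B*x)⁻¹ * G (B*x) := by
        have := hL1u ((B*x)⁻¹) (inv_pos.2 hBx)
        rwa [inv_inv] at this
      have h2 : (Real.exp 1)⁻¹ * (x⁻¹ * G x) ≤ φ x⁻¹ := by
        have := hL1l x⁻¹ (inv_pos.2 hx)
        rwa [inv_inv] at this
      have h4 := le_trans (le_trans h2 (hpt x hx))
        (mul_le_mul_of_nonneg_left h1 (mul_pos hε0 hB0).le)
      have h5 : ε*B*((B*x)⁻¹ * G (B*x)) = (Real.exp 1)⁻¹/8 * (x⁻¹ * G (B*x)) := by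
        rw [hεdef]; field_simp
      rw [h5] at h4
      have h6 := mul_le_mul_of_nonneg_left h4
        (by positivity : (0:ℝ) ≤ 8 * Real.exp 1 * x)
      have h7 : 8 * Real.exp 1 * x * ((Real.exp 1)⁻¹ * (x⁻¹ * G x)) = 8 * G x := by
        field_simp
      have h8 : 8 * Real.exp 1 * x * ((Real.exp 1)⁻¹/8 * (x⁻¹ * G (B*x))) = G (B*x) := by
        field_simp
      rw [h7, h8] at h6
      exact h6
    have hκG : ∀ x : ℝ, 0 < x → 7 * G x ≤ (B-1) * x * κ x := by
      intro x hx
      have hBx : x ≤ B*x := by nlinarith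
      have h1 := hGdiff x (B*x) hx hBx
      have h2 := hG8 x hx
      have h3 : (B*x - x) * κ x = (B-1)*x*κ x := by ring
      rw [h3] at h1
      linarith
    refine ⟨max ((B-1)/7) (Real.exp 1),
      lt_of_lt_of_le hepos (le_max_right _ _), ?_⟩
    intro l hl
    have hil : 0 < l⁻¹ := inv_pos.2 hl
    have hκl : 0 < κ l⁻¹ := hκpos _ hil
    have hGl : l⁻¹ * κ l⁻¹ ≤ G l⁻¹ := hG_low l⁻¹ hil
    have hCe : Real.exp 1 ≤ max ((B-1)/7) (Real.exp 1) := le_max_right _ _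
    have hCd : (B-1)/7 ≤ max ((B-1)/7) (Real.exp 1) := le_max_left _ _
    constructor
    · have h1 := hL1l l hl
      have h3 : l * (l⁻¹ * κ l⁻¹) ≤ l * G l⁻¹ := mul_le_mul_of_nonneg_left hGl hl.le
      rw [← mul_assoc, mul_inv_cancel₀ (ne_of_gt hl), one_mul] at h3
      have h4 : (Real.exp 1)⁻¹ * κ l⁻¹ ≤ φ l := by
        have h5 := mul_le_mul_of_nonneg_left h3 (inv_pos.2 hepos).le
        linarith
      calc (max ((B-1)/7) (Real.exp 1))⁻¹ * κ l⁻¹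
          ≤ (Real.exp 1)⁻¹ * κ l⁻¹ :=
            mul_le_mul_of_nonneg_right (inv_anti₀ hepos hCe) hκl.le
        _ ≤ φ l := h4
    · have h1 := hL1u l hl
      have h2 := hκG l⁻¹ hil
      have h3 : l * G l⁻¹ ≤ (B-1)/7 * κ l⁻¹ := by
        have h4 := mul_le_mul_of_nonneg_left h2 hl.le
        have h5 : l * ((B-1) * l⁻¹ * κ l⁻¹) = (B-1) * κ l⁻¹ := by
          field_simp
        rw [h5] at h4
        linarith
      calc φ l ≤ (B-1)/7 * κ l⁻¹ := le_trans h1 h3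
        _ ≤ max ((B-1)/7) (Real.exp 1) * κ l⁻¹ := mul_le_mul_of_nonneg_right hCd hκl.le
  refine ⟨⟨fun hk => ?_, fun hp => ?_⟩, hA⟩
  · obtain ⟨C, hC, hcomp⟩ := hA hk
    have ht := sPhi_transfer (c := C⁻¹) (C := C) (inv_pos.2 hC)
      (fun x hx => (hcomp x hx).1) (fun x hx => (hcomp x hx).2)
      (fun x hx => hκpos x hx)
    have h2 := memIo_transfer (a := -1) (b := 0) (D := C / C⁻¹)
      (div_pos hC (inv_pos.2 hC)) ht hk
    simpa using h2
  · obtain ⟨C, hC, hcomp⟩ := hB hp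
    have hkl : ∀ x, 0 < x → C⁻¹ * φ x⁻¹ ≤ κ x := by
      intro x hx
      have h := (hcomp x⁻¹ (inv_pos.2 hx)).2
      rw [inv_inv] at h
      calc C⁻¹ * φ x⁻¹ ≤ C⁻¹ * (C * κ x) := mul_le_mul_of_nonneg_left h (inv_pos.2 hC).le
        _ = κ x := by field_simp
    have hku : ∀ x, 0 < x → κ x ≤ C * φ x⁻¹ := by
      intro x hx
      have h := (hcomp x⁻¹ (inv_pos.2 hx)).1
      rw [inv_inv] at h
      calc κ x = C * (C⁻¹ * κ x) := by field_simp
        _ ≤ C * φ x⁻¹ := mul_le_mul_of_nonneg_left h hC.le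
    have ht := sPhi_transfer (c := C⁻¹) (C := C) (inv_pos.2 hC) hkl hku hφ_pos
    have h2 := memIo_transfer (a := 0) (b := 1) (D := C / C⁻¹)
      (div_pos hC (inv_pos.2 hC)) ht hp
    simpa using h2
end
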